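/- arXiv:1402.2397 — 10 statements merged into one kernel-verified Lean document; each statement's English description precedes it below -/
import Mathlib

section
/- In the triangle configuration, for all i ≠ j in {1,…,k}, the permutation σ_j⁻¹∘σ_i is an involution, i.e. (σ_j⁻¹∘σ_i)∘(σ_j⁻¹∘σ_i) = id, and moreover σ_i(l) ≠ σ_j(l) for every l ∈ {1,…,k}; consequently, for each fixed l ∈ {1,…,k}, the map j ↦ σ_j(l) is a bijection of {1,…,k} onto itself. -/
/-- A family of vectors is `3`-independent if any three members with pairwise
distinct indices are linearly independent. -/
def ThreeIndep {V : Type*} [AddCommGroup V] [Module ℝ V] {I : Type*} (w : I → V) : Prop :=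
  ∀ i j l : I, i ≠ j → i ≠ l → j ≠ l → LinearIndependent ℝ ![w i, w j, w l]

private lemma sign_ne_zero' {x : ℝ} (h : x = 1 ∨ x = -1) : x ≠ 0 := by
  rcases h with h | h <;> simp [h]

private lemma sign_mul' {x y : ℝ} (hx : x = 1 ∨ x = -1) (hy : y = 1 ∨ y = -1) :
    x * y = 1 ∨ x * y = -1 := by
  rcases hx with hx | hx <;> rcases hy with hy | hy <;> simp [hx, hy]

private lemma sign_eq_of_add_ne_zero' {x y : ℝ} (hx : x = 1 ∨ x = -1)
    (hy : y = 1 ∨ y = -1) (h : x + y ≠ 0) : x = y := by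
  rcases hx with hx | hx <;> rcases hy with hy | hy <;> simp_all <;> norm_num at h

private lemma li3 {V : Type*} [AddCommGroup V] [Module ℝ V] {u v w : V}
    (h : LinearIndependent ℝ ![u, v, w]) {a b c : ℝ}
    (hrel : a • u + b • v + c • w = 0) : a = 0 ∧ b = 0 ∧ c = 0 := by
  rw [Fintype.linearIndependent_iff] at h
  have h0 := h ![a, b, c] (by
    simpa [Fin.sum_univ_three] using hrel)
  exact ⟨by simpa using h0 0, by simpa using h0 1, by simpa using h0 2⟩

/-- Sublemma: in the triangle configuration, for `i ≠ j` the permutation `σ_j⁻¹ ∘ σ_i`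
is an involution without fixed points, and for fixed `l` the map `j ↦ σ_j l` is a
bijection. -/
theorem triangle_config_sigma_involutive_no_fixed_points
    {V : Type*} [AddCommGroup V] [Module ℝ V]
    (k : ℕ) (hk : 0 < k)
    (α β γ : Fin k → V)
    (ε δ : Fin k → Fin k → ℝ)
    (hε : ∀ i j, ε i j = 1 ∨ ε i j = -1)
    (hδ : ∀ i j, δ i j = 1 ∨ δ i j = -1)
    (σ : Fin k → Equiv.Perm (Fin k))
    (hσ1 : σ ⟨0, hk⟩ = 1)
    (hR1 : ∀ i, γ i = α ⟨0, hk⟩ - β i)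
    (hR2 : ∀ i j, γ i = ε i j • α j + δ i j • β (σ j i))
    (hI1 : ThreeIndep (Sum.elim α β))
    (hI2 : ThreeIndep (Sum.elim α γ))
    (hI3 : ThreeIndep (Sum.elim β γ)) :
    (∀ i j : Fin k, i ≠ j → ((σ j)⁻¹ * σ i) * ((σ j)⁻¹ * σ i) = 1) ∧
    (∀ i j : Fin k, i ≠ j → ∀ l : Fin k, σ i l ≠ σ j l) ∧
    (∀ l : Fin k, Function.Bijective (fun j : Fin k => σ j l)) := by
  -- no fixed points
  have nofix : ∀ i j : Fin k, i ≠ j → ∀ l : Fin k, σ i l ≠ σ j l := by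
    intro i j hij l hEq
    have h1 := hR2 l i
    have h2 := hR2 l j
    rw [hEq] at h1
    have E : (ε l i) • α i + (-(ε l j)) • α j + (δ l i - δ l j) • β (σ j l) = 0 := by
      linear_combination (norm := module) h2 - h1
    have hind := hI1 (Sum.inl i) (Sum.inl j) (Sum.inr (σ j l))
      (by simp [hij]) (by simp) (by simp)
    simp only [Sum.elim_inl, Sum.elim_inr] at hind
    exact sign_ne_zero' (hε l i) (li3 hind E).1
  have key : ∀ i j : Fin k, i ≠ j → ∀ l m : Fin k, σ j m = σ i l → σ i m = σ j l := by
    intro i j hij l m hm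
    by_contra hne
    have hml : m ≠ l := by
      rintro rfl
      exact nofix i j hij _ hm.symm
    have h1 := hR2 l i
    have h3 := hR2 l j
    have h2 := hR2 m j
    have h4 := hR2 m i
    rw [hm] at h2
    set p := σ i l with hp
    set q := σ j l with hq
    set r := σ i m with hr
    have hpq : p ≠ q := nofix i j hij l
    have hpr : p ≠ r := fun h => hml ((σ i).injective h.symm)
    have hqr : q ≠ r := fun h => hne h.symm
    have F : (δ m j * ε l i + δ l i * ε m i) • α i
        + (-(δ m j * ε l j + δ l i * ε m j)) • α j
        + ((-(δ m j * δ l j)) • β q + (δ l i * δ m i) • β r) = 0 := by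
      linear_combination (norm := module)
        (δ m j) • h3 - (δ m j) • h1 + (δ l i) • h2 - (δ l i) • h4
    by_cases hA : δ m j * ε l i + δ l i * ε m i = 0
    · by_cases hB : δ m j * ε l j + δ l i * ε m j = 0
      · rw [hA, hB] at F
        simp only [neg_zero, zero_smul, zero_add] at F
        have F' : (-(δ m j * δ l j)) • β q + (δ l i * δ m i) • β r
            + (0 : ℝ) • γ ⟨0, hk⟩ = 0 := by
          rw [zero_smul, add_zero]; exact F
        have hind := hI3 (Sum.inl q) (Sum.inl r) (Sum.inr ⟨0, hk⟩)
          (by simp [hqr]) (by simp) (by simp)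
        simp only [Sum.elim_inl, Sum.elim_inr] at hind
        have := (li3 hind F').1
        exact mul_ne_zero (sign_ne_zero' (hδ m j)) (sign_ne_zero' (hδ l j)) (by linarith)
      · rw [hA] at F
        simp only [zero_smul, zero_add] at F
        rw [← add_assoc] at F
        have hind := hI1 (Sum.inl j) (Sum.inr q) (Sum.inr r)
          (by simp) (by simp) (by simp [hqr])
        simp only [Sum.elim_inl, Sum.elim_inr] at hind
        have := (li3 hind F).2.1
        exact mul_ne_zero (sign_ne_zero' (hδ m j)) (sign_ne_zero' (hδ l j)) (by linarith)
    · by_cases hB : δ m j * ε l j + δ l i * ε m j = 0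
      · rw [hB] at F
        simp only [neg_zero, zero_smul, add_zero] at F
        rw [← add_assoc] at F
        have hind := hI1 (Sum.inl i) (Sum.inr q) (Sum.inr r)
          (by simp) (by simp) (by simp [hqr])
        simp only [Sum.elim_inl, Sum.elim_inr] at hind
        have := (li3 hind F).2.1
        exact mul_ne_zero (sign_ne_zero' (hδ m j)) (sign_ne_zero' (hδ l j)) (by linarith)
      · -- both nonzero: get ε-relation
        have h5 : δ m j * ε l i = δ l i * ε m i :=
          sign_eq_of_add_ne_zero' (sign_mul' (hδ m j) (hε l i))
            (sign_mul' (hδ l i) (hε m i)) hA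
        have h6 : δ m j * ε l j = δ l i * ε m j :=
          sign_eq_of_add_ne_zero' (sign_mul' (hδ m j) (hε l j))
            (sign_mul' (hδ l i) (hε m j)) hB
        have hC : ε l i * ε m j = ε m i * ε l j := by
          have hmul : (δ m j * δ l i) * (ε l i * ε m j)
              = (δ m j * δ l i) * (ε m i * ε l j) := by
            linear_combination (δ l i * ε m j) * h5 - (δ l i * ε m i) * h6
          exact mul_left_cancel₀
            (mul_ne_zero (sign_ne_zero' (hδ m j)) (sign_ne_zero' (hδ l i))) hmul
        have G : (ε l i * ε m j - ε m i * ε l j) • α j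
            + ((ε m i * δ l i + ε l i * δ m j) • β p
              + ((-(ε m i * δ l j)) • β q + (-(ε l i * δ m i)) • β r)) = 0 := by
          linear_combination (norm := module)
            (ε m i) • h3 - (ε m i) • h1 + (ε l i) • h4 - (ε l i) • h2
        rw [sub_eq_zero.mpr hC, zero_smul, zero_add, ← add_assoc] at G
        have hind := hI3 (Sum.inl p) (Sum.inl q) (Sum.inl r)
          (by simp [hpq]) (by simp [hpr]) (by simp [hqr])
        simp only [Sum.elim_inl, Sum.elim_inr] at hind
        have := (li3 hind G).2.1
        have : ε m i * δ l j = 0 := by linarith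
        exact mul_ne_zero (sign_ne_zero' (hε m i)) (sign_ne_zero' (hδ l j)) this
  refine ⟨?_, nofix, ?_⟩
  · intro i j hij
    ext l
    simp only [Equiv.Perm.coe_mul, Function.comp_apply, Equiv.Perm.coe_one, id_eq]
    have hmm := key i j hij l ((σ j)⁻¹ (σ i l)) (by simp)
    rw [hmm]
    simp
  · intro l
    have hinj : Function.Injective (fun j : Fin k => σ j l) := by
      intro a b hab
      by_contra hne
      exact nofix a b hne l hab
    exact Finite.injective_iff_bijective.mp hinj
end

section
/- In the triangle configuration, the permutations σ_1,…,σ_k pairwise commute and each is an involution: σ_i∘σ_i = id for all i ∈ {1,…,k}, and σ_i∘σ_j = σ_j∘σ_i for all i,j ∈ {1,…,k}. -/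
/-- From a linear relation among three linearly independent vectors,
all coefficients vanish. -/
lemma triangle_dep3 {V : Type*} [AddCommGroup V] [Module ℝ V] {x y z : V} {a b c : ℝ}
    (h : a • x + b • y + c • z = 0) (hli : LinearIndependent ℝ ![x, y, z]) :
    a = 0 ∧ b = 0 ∧ c = 0 := by
  have h2 := Fintype.linearIndependent_iff.mp hli ![a, b, c]
    (by simpa [Fin.sum_univ_three, add_assoc] using h)
  exact ⟨h2 0, h2 1, h2 2⟩

/-- In the triangle configuration the permutations `σ_1, …, σ_k` are pairwise
commuting involutions. -/
theorem triangle_config_sigma_commuting_involutions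
    {V : Type*} [AddCommGroup V] [Module ℝ V]
    (k : ℕ) (hk : 0 < k)
    (α β γ : Fin k → V)
    (ε δ : Fin k → Fin k → ℝ)
    (hε : ∀ i j, ε i j = 1 ∨ ε i j = -1)
    (hδ : ∀ i j, δ i j = 1 ∨ δ i j = -1)
    (σ : Fin k → Equiv.Perm (Fin k))
    (hσ1 : σ ⟨0, hk⟩ = 1)
    (hR1 : ∀ i, γ i = α ⟨0, hk⟩ - β i)
    (hR2 : ∀ i j, γ i = ε i j • α j + δ i j • β (σ j i))
    (hI1 : ThreeIndep (Sum.elim α β))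
    (hI2 : ThreeIndep (Sum.elim α γ))
    (hI3 : ThreeIndep (Sum.elim β γ)) :
    (∀ i : Fin k, σ i * σ i = 1) ∧
    (∀ i j : Fin k, σ i * σ j = σ j * σ i) := by
  set o : Fin k := ⟨0, hk⟩ with ho
  -- Step A: each σ j is an involution (pointwise)
  have hinv : ∀ j i, σ j (σ j i) = i := by
    intro j i
    by_cases hfix : σ j i = i
    · rw [hfix, hfix]
    · by_contra hne
      have hii' : i ≠ σ j i := fun h => hfix h.symm
      have hii'' : i ≠ σ j (σ j i) := fun h => hne h.symm
      have hi'i'' : σ j i ≠ σ j (σ j i) := fun h => hfix ((σ j).injective h).symm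
      have H1 := hR1 i
      have H2 := hR2 i j
      have H3 := hR1 (σ j i)
      have H4 := hR2 (σ j i) j
      have H5 := hR1 (σ j (σ j i))
      have hliA : LinearIndependent ℝ ![β i, α j, β (σ j (σ j i))] := by
        have h := hI1 (Sum.inr i) (Sum.inl j) (Sum.inr (σ j (σ j i)))
          (by simp) (by simp [hii'']) (by simp)
        simpa using h
      have hliB : LinearIndependent ℝ ![γ i, γ (σ j (σ j i)), α j] := by
        have h := hI2 (Sum.inr i) (Sum.inr (σ j (σ j i))) (Sum.inl j)
          (by simp [hii'']) (by simp) (by simp)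
        simpa using h
      have hliC : LinearIndependent ℝ ![β i, β (σ j i), β (σ j (σ j i))] := by
        have h := hI1 (Sum.inr i) (Sum.inr (σ j i)) (Sum.inr (σ j (σ j i)))
          (by simp [hii']) (by simp [hii'']) (by simp [hi'i''])
        simpa using h
      have hliD : LinearIndependent ℝ ![α o, γ i, γ (σ j (σ j i))] := by
        have h := hI2 (Sum.inl o) (Sum.inr i) (Sum.inr (σ j (σ j i)))
          (by simp) (by simp) (by simp [hii''])
        simpa using h
      rcases hδ i j with hd | hd
      · -- δ i j = 1
        rw [hd] at H2
        have hrel : (-1 : ℝ) • β i + (ε (σ j i) j - ε i j) • α j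
            + δ (σ j i) j • β (σ j (σ j i)) = 0 := by
          linear_combination (norm := module) -H1 + H2 + H3 - H4
        obtain ⟨h0, -, -⟩ := triangle_dep3 hrel hliA
        norm_num at h0
      · -- δ i j = -1
        rw [hd] at H2
        rcases hδ (σ j i) j with hd' | hd'
        · rw [hd'] at H4
          have hrel : (1 : ℝ) • γ i + (1 : ℝ) • γ (σ j (σ j i))
              + (-(ε i j + ε (σ j i) j)) • α j = 0 := by
            linear_combination (norm := module) H2 - H3 + H4 + H5
          obtain ⟨h0, -, -⟩ := triangle_dep3 hrel hliB
          norm_num at h0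
        · rw [hd'] at H4
          rcases hε i j with he | he <;> rcases hε (σ j i) j with he' | he' <;>
            rw [he] at H2 <;> rw [he'] at H4
          · -- ε = ε' = 1
            have hrel : (1 : ℝ) • β i + (-2 : ℝ) • β (σ j i)
                + (1 : ℝ) • β (σ j (σ j i)) = 0 := by
              linear_combination (norm := module) H1 - H2 - H3 + H4
            obtain ⟨h0, -, -⟩ := triangle_dep3 hrel hliC
            norm_num at h0
          · -- ε = 1, ε' = -1
            have hrel : (2 : ℝ) • α o + (1 : ℝ) • γ i
                + (-1 : ℝ) • γ (σ j (σ j i)) = 0 := by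
              linear_combination (norm := module) H2 - H3 + H4 - H5
            obtain ⟨h0, -, -⟩ := triangle_dep3 hrel hliD
            norm_num at h0
          · -- ε = -1, ε' = 1
            have hrel : (2 : ℝ) • α o + (1 : ℝ) • γ i
                + (-1 : ℝ) • γ (σ j (σ j i)) = 0 := by
              linear_combination (norm := module) H2 - H3 + H4 - H5
            obtain ⟨h0, -, -⟩ := triangle_dep3 hrel hliD
            norm_num at h0
          · -- ε = ε' = -1
            have hrel : (1 : ℝ) • β i + (-2 : ℝ) • β (σ j i)
                + (1 : ℝ) • β (σ j (σ j i)) = 0 := by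
              linear_combination (norm := module) H1 - H2 - H3 + H4
            obtain ⟨h0, -, -⟩ := triangle_dep3 hrel hliC
            norm_num at h0
  -- Step B: structure formula for j ≠ o
  have hstr : ∀ j, j ≠ o → ∀ i, γ (σ j i) = α o + ε i j • α j - γ i := by
    intro j hj i
    have hoj : (Sum.inl o : Fin k ⊕ Fin k) ≠ Sum.inl j := by simp [Ne.symm hj]
    have H1 := hR1 i
    have H2 := hR2 i j
    have H3 := hR1 (σ j i)
    have H4 : γ (σ j i) = ε (σ j i) j • α j + δ (σ j i) j • β i := by
      have h := hR2 (σ j i) j; rwa [hinv j i] at h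
    rcases hδ i j with hd | hd
    · rw [hd] at H2
      linear_combination (norm := module) H2 + H3
    · exfalso
      rw [hd] at H2
      have hliE : LinearIndependent ℝ ![α o, α j, γ (σ j i)] := by
        have h := hI2 (Sum.inl o) (Sum.inl j) (Sum.inr (σ j i)) hoj (by simp) (by simp)
        simpa using h
      have hliF : LinearIndependent ℝ ![α o, α j, γ i] := by
        have h := hI2 (Sum.inl o) (Sum.inl j) (Sum.inr i) hoj (by simp) (by simp)
        simpa using h
      rcases hδ (σ j i) j with hd' | hd'
      · rw [hd'] at H4
        have hrel : (2 : ℝ) • α o + (ε (σ j i) j - ε i j) • α j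
            + (-2 : ℝ) • γ (σ j i) = 0 := by
          linear_combination (norm := module) -H1 + H2 - H3 - H4
        obtain ⟨h0, -, -⟩ := triangle_dep3 hrel hliE
        norm_num at h0
      · rw [hd'] at H4
        have hrel : (2 : ℝ) • α o + (-(ε i j + ε (σ j i) j)) • α j
            + (0 : ℝ) • γ i = 0 := by
          linear_combination (norm := module) -H1 + H2 - H3 + H4
        obtain ⟨h0, -, -⟩ := triangle_dep3 hrel hliF
        norm_num at h0
  -- Step C: commutativity (pointwise)
  have hcomm : ∀ j l i, σ j (σ l i) = σ l (σ j i) := by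
    intro j l i
    by_cases hj : j = o
    · rw [hj, hσ1]; simp
    by_cases hl : l = o
    · rw [hl, hσ1]; simp
    by_contra hmn
    have E1 := hstr j hj i
    have E2 := hstr l hl (σ j i)
    have E3 := hstr l hl i
    have E4 := hstr j hj (σ l i)
    -- m := σ l (σ j i), n := σ j (σ l i); hmn : n ≠ m
    have hnm : σ l (σ j i) ≠ σ j (σ l i) := fun h => hmn h.symm
    have hmi : σ l (σ j i) ≠ i := by
      intro h
      have h2 : σ j i = σ l i := by
        have h3 := congrArg (σ l) h
        rwa [hinv l (σ j i)] at h3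
      exact hmn (by rw [← h2, h]; exact hinv j i)
    have hni : σ j (σ l i) ≠ i := by
      intro h
      have h2 : σ l i = σ j i := by
        have h3 := congrArg (σ j) h
        rwa [hinv j (σ l i)] at h3
      exact hmn (by rw [h, ← h2, hinv l i])
    by_cases hfl : ε (σ j i) l = ε i l
    · by_cases hfj : ε (σ l i) j = ε i j
      · rw [hfl] at E2
        rw [hfj] at E4
        have hrel : (1 : ℝ) • γ (σ l (σ j i)) + (1 : ℝ) • γ (σ j (σ l i))
            + (-2 : ℝ) • γ i = 0 := by
          linear_combination (norm := module) E2 - E1 + E4 - E3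
        have hli : LinearIndependent ℝ
            ![γ (σ l (σ j i)), γ (σ j (σ l i)), γ i] := by
          have h := hI2 (Sum.inr (σ l (σ j i))) (Sum.inr (σ j (σ l i))) (Sum.inr i)
            (by simp [hnm]) (by simp [hmi]) (by simp [hni])
          simpa using h
        obtain ⟨h0, -, -⟩ := triangle_dep3 hrel hli
        norm_num at h0
      · rw [hfl] at E2
        have hfj' : ε (σ l i) j = -ε i j := by
          rcases hε i j with h1 | h1 <;> rcases hε (σ l i) j with h2 | h2 <;>
            rw [h1, h2] <;> first
              | (exact absurd (h2.trans h1.symm) hfj)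
              | norm_num
        rw [hfj'] at E4
        have hrel : (1 : ℝ) • γ (σ l (σ j i)) + (-1 : ℝ) • γ (σ j (σ l i))
            + (-2 * ε i l) • α l = 0 := by
          linear_combination (norm := module) E2 - E1 - E4 + E3
        have hli : LinearIndependent ℝ
            ![γ (σ l (σ j i)), γ (σ j (σ l i)), α l] := by
          have h := hI2 (Sum.inr (σ l (σ j i))) (Sum.inr (σ j (σ l i))) (Sum.inl l)
            (by simp [hnm]) (by simp) (by simp)
          simpa using h
        obtain ⟨h0, -, -⟩ := triangle_dep3 hrel hli
        norm_num at h0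
    · have hfl' : ε (σ j i) l = -ε i l := by
        rcases hε i l with h1 | h1 <;> rcases hε (σ j i) l with h2 | h2 <;>
          rw [h1, h2] <;> first
            | (exact absurd (h2.trans h1.symm) hfl)
            | norm_num
      rw [hfl'] at E2
      have hrel : (1 : ℝ) • γ (σ l (σ j i)) + (-1 : ℝ) • γ (σ j (σ l i))
          + (ε i j + ε (σ l i) j) • α j = 0 := by
        linear_combination (norm := module) E2 - E1 - E4 + E3
      have hli : LinearIndependent ℝ
          ![γ (σ l (σ j i)), γ (σ j (σ l i)), α j] := by
        have h := hI2 (Sum.inr (σ l (σ j i))) (Sum.inr (σ j (σ l i))) (Sum.inl j)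
          (by simp [hnm]) (by simp) (by simp)
        simpa using h
      obtain ⟨h0, -, -⟩ := triangle_dep3 hrel hli
      norm_num at h0
  refine ⟨fun i => ?_, fun i j => ?_⟩
  · exact Equiv.ext fun m => by
      simp only [Equiv.Perm.mul_apply, Equiv.Perm.one_apply]; exact hinv i m
  · exact Equiv.ext fun m => by
      simp only [Equiv.Perm.mul_apply]; exact hcomm i j m
end

section
/- In the triangle configuration, for every i ∈ {1,…,k} and every j ∈ {1,…,k} with j ≠ 1, one has δ_{ij} = 1 and ε_{σ_j(i),j} = ε_{ij}; in other words, γ_i = ε_{ij}·α_j + β_{σ_j(i)} and γ_{σ_j(i)} = ε_{ij}·α_j + β_i. -/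
private lemma li3_coeffs {V : Type*} [AddCommGroup V] [Module ℝ V] {x y z : V}
    (h : LinearIndependent ℝ ![x, y, z]) {a b c : ℝ}
    (hrel : a • x + b • y + c • z = 0) : a = 0 ∧ b = 0 ∧ c = 0 := by
  rw [Fintype.linearIndependent_iff] at h
  have h0 := h ![a, b, c] (by simpa [Fin.sum_univ_three] using hrel)
  exact ⟨h0 0, h0 1, h0 2⟩

/-- Sublemma: in the triangle configuration, for every `i` and every `j ≠ 1` one has
`δ_{ij} = 1` and `ε_{σ_j(i),j} = ε_{ij}`, i.e. `γ_i = ε_{ij}·α_j + β_{σ_j(i)}` and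
`γ_{σ_j(i)} = ε_{ij}·α_j + β_i`. -/
theorem triangle_config_delta_eq_one
    {V : Type*} [AddCommGroup V] [Module ℝ V]
    (k : ℕ) (hk : 0 < k)
    (α β γ : Fin k → V)
    (ε δ : Fin k → Fin k → ℝ)
    (hε : ∀ i j, ε i j = 1 ∨ ε i j = -1)
    (hδ : ∀ i j, δ i j = 1 ∨ δ i j = -1)
    (σ : Fin k → Equiv.Perm (Fin k))
    (hσ1 : σ ⟨0, hk⟩ = 1)
    (hR1 : ∀ i, γ i = α ⟨0, hk⟩ - β i)
    (hR2 : ∀ i j, γ i = ε i j • α j + δ i j • β (σ j i))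
    (hI1 : ThreeIndep (Sum.elim α β))
    (hI2 : ThreeIndep (Sum.elim α γ))
    (hI3 : ThreeIndep (Sum.elim β γ)) :
    ∀ i j : Fin k, j ≠ ⟨0, hk⟩ →
      δ i j = 1 ∧ ε (σ j i) j = ε i j ∧
      γ i = ε i j • α j + β (σ j i) ∧
      γ (σ j i) = ε i j • α j + β i := by
  intro i j hj
  -- σ j has no fixed points
  have hfix : ∀ m : Fin k, σ j m ≠ m := by
    intro m hm
    have key : α ⟨0, hk⟩ - β m = ε m j • α j + δ m j • β m := by
      have h2 := (hR1 m).symm.trans (hR2 m j)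
      rwa [hm] at h2
    have hli := hI1 (Sum.inl ⟨0, hk⟩) (Sum.inl j) (Sum.inr m)
      (by simpa using hj.symm) (by simp) (by simp)
    simp only [Sum.elim_inl, Sum.elim_inr] at hli
    have h0 := li3_coeffs hli (a := 1) (b := -(ε m j)) (c := -(1 + δ m j))
      (by linear_combination (norm := module) key)
    exact one_ne_zero h0.1
  have hsi : σ j i ≠ i := hfix i
  have keyi := (hR1 i).symm.trans (hR2 i j)
  have keys := (hR1 (σ j i)).symm.trans (hR2 (σ j i) j)
  rcases hδ i j with hd1 | hdm
  · -- δ i j = 1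
    rw [hd1, one_smul] at keyi
    have hti : σ j (σ j i) = i := by
      by_contra hti
      have hli := hI1 (Sum.inl j) (Sum.inr i) (Sum.inr (σ j (σ j i)))
        (by simp) (by simp) (by simpa using Ne.symm hti)
      simp only [Sum.elim_inl, Sum.elim_inr] at hli
      have h0 := li3_coeffs hli (a := ε i j - ε (σ j i) j) (b := 1) (c := -(δ (σ j i) j))
        (by linear_combination (norm := module) keys - keyi)
      exact one_ne_zero h0.2.1
    rw [hti] at keys
    have hli := hI1 (Sum.inl j) (Sum.inr i) (Sum.inl ⟨0, hk⟩)
      (by simp) (by simpa using hj) (by simp)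
    simp only [Sum.elim_inl, Sum.elim_inr] at hli
    have h0 := li3_coeffs hli (a := ε i j - ε (σ j i) j) (b := 1 - δ (σ j i) j) (c := 0)
      (by linear_combination (norm := module) keys - keyi)
    have heps : ε (σ j i) j = ε i j := by linarith [h0.1]
    have hds : δ (σ j i) j = 1 := by linarith [h0.2.1]
    refine ⟨hd1, heps, ?_, ?_⟩
    · rw [hR2 i j, hd1, one_smul]
    · rw [hR2 (σ j i) j, hti, hds, one_smul, heps]
  · -- δ i j = -1 : contradiction
    exfalso
    rw [hdm] at keyi
    by_cases hti : σ j (σ j i) = i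
    · rw [hti] at keys
      have hli := hI1 (Sum.inl j) (Sum.inr (σ j i)) (Sum.inr i)
        (by simp) (by simp) (by simpa using hsi)
      simp only [Sum.elim_inl, Sum.elim_inr] at hli
      have h0 := li3_coeffs hli (a := ε i j - ε (σ j i) j) (b := -2) (c := 1 - δ (σ j i) j)
        (by linear_combination (norm := module) keys - keyi)
      exact absurd h0.2.1 (by norm_num)
    · have hee : ε (σ j i) j = - ε i j := by
        by_contra hee
        have heq : ε (σ j i) j = ε i j := by
          rcases hε (σ j i) j with h2 | h2 <;> rcases hε i j with h1 | h1 <;>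
            rw [h1, h2] at hee ⊢ <;> revert hee <;> norm_num
        rw [heq] at keys
        have hli := hI1 (Sum.inr (σ j i)) (Sum.inr i) (Sum.inr (σ j (σ j i)))
          (by simpa using hsi) (by simpa using (hfix (σ j i)).symm) (by simpa using Ne.symm hti)
        simp only [Sum.elim_inr] at hli
        have h0 := li3_coeffs hli (a := 2) (b := -1) (c := δ (σ j i) j)
          (by linear_combination (norm := module) keyi - keys)
        exact absurd h0.1 (by norm_num)
      rw [hee] at keys
      have hli := hI1 (Sum.inl ⟨0, hk⟩) (Sum.inr i) (Sum.inr (σ j (σ j i)))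
        (by simp) (by simp) (by simpa using Ne.symm hti)
      simp only [Sum.elim_inl, Sum.elim_inr] at hli
      have h0 := li3_coeffs hli (a := 2) (b := -1) (c := -(δ (σ j i) j))
        (by linear_combination (norm := module) keyi + keys)
      exact absurd h0.1 (by norm_num)
end

section
/- In the triangle configuration with k ≥ 3, for every i ∈ {1,…,k} and every j ∈ {1,…,k} with j ≠ 1 and j ≠ 2, one has ε_{σ_j(i),2} = −ε_{i,2}. -/
private lemma ThreeIndep.coeffs {V : Type*} [AddCommGroup V] [Module ℝ V] {I : Type*}
    {w : I → V} (hw : ThreeIndep w) {x y z : I} (hxy : x ≠ y) (hxz : x ≠ z) (hyz : y ≠ z)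
    {a b c : ℝ} (h : a • w x + b • w y + c • w z = 0) : a = 0 ∧ b = 0 ∧ c = 0 := by
  have h3 := hw x y z hxy hxz hyz
  rw [Fintype.linearIndependent_iff] at h3
  have h4 := h3 ![a, b, c] (by simpa [Fin.sum_univ_three] using h)
  exact ⟨by simpa using h4 0, by simpa using h4 1, by simpa using h4 2⟩

private lemma ThreeIndep.coeffs2 {V : Type*} [AddCommGroup V] [Module ℝ V] {I : Type*}
    {w : I → V} (hw : ThreeIndep w) {x y z : I} (hxy : x ≠ y) (hxz : x ≠ z) (hyz : y ≠ z)
    {a b : ℝ} (h : a • w x + b • w y = 0) : a = 0 ∧ b = 0 := by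
  have := hw.coeffs hxy hxz hyz (c := 0) (by simpa using h)
  exact ⟨this.1, this.2.1⟩

private lemma inl_ne_inl {A B : Type*} {x y : A} (h : x ≠ y) :
    (Sum.inl x : Sum A B) ≠ Sum.inl y := fun hh => h (Sum.inl.inj hh)

private lemma inr_ne_inr {A B : Type*} {x y : B} (h : x ≠ y) :
    (Sum.inr x : Sum A B) ≠ Sum.inr y := fun hh => h (Sum.inr.inj hh)

/-- Pairing lemma: for every column `j ≠ i0`, `σ j` is a fixed-point-free involution,
`ε` is constant on its pairs, and `β i + β (σ j i) = α i0 - ε i j • α j`. -/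
private lemma lemA {V : Type*} [AddCommGroup V] [Module ℝ V] {k : ℕ}
    {α β : Fin k → V} {ε δ : Fin k → Fin k → ℝ} {σ : Fin k → Equiv.Perm (Fin k)} {i0 : Fin k}
    (hε : ∀ i j, ε i j = 1 ∨ ε i j = -1) (hδ : ∀ i j, δ i j = 1 ∨ δ i j = -1)
    (hR : ∀ i j, α i0 - β i = ε i j • α j + δ i j • β (σ j i))
    (hI1 : ThreeIndep (Sum.elim α β)) {j : Fin k} (hj : j ≠ i0) :
    ∀ i, σ j i ≠ i ∧ σ j (σ j i) = i ∧ ε (σ j i) j = ε i j ∧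
      β i + β (σ j i) = α i0 - ε i j • α j := by
  have fpf : ∀ i, σ j i ≠ i := by
    intro i hfix
    have h := hR i j
    rw [hfix] at h
    have h0 : (1:ℝ) • Sum.elim α β (.inl i0) + (-(ε i j)) • Sum.elim α β (.inl j)
        + (-(1 + δ i j)) • Sum.elim α β (.inr i) = 0 := by
      simp only [Sum.elim_inl, Sum.elim_inr]
      linear_combination (norm := module) h
    exact one_ne_zero (hI1.coeffs (inl_ne_inl hj.symm) (Sum.inl_ne_inr) (Sum.inl_ne_inr) h0).1
  have keyA : ∀ i, δ i j = 1 → σ j (σ j i) = i ∧ ε (σ j i) j = ε i j ∧ δ (σ j i) j = 1 := by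
    intro i hd
    have E1 := hR i j
    rw [hd, one_smul] at E1
    have E2 := hR (σ j i) j
    by_cases hn2 : σ j (σ j i) = i
    · rw [hn2] at E2
      have h0 : (ε i j - ε (σ j i) j) • Sum.elim α β (.inl j)
          + (1 - δ (σ j i) j) • Sum.elim α β (.inr i) = 0 := by
        simp only [Sum.elim_inl, Sum.elim_inr]
        linear_combination (norm := module) E2 - E1
      have hc := hI1.coeffs2 (x := .inl j) (y := .inr i) (z := .inl i0)
        Sum.inl_ne_inr (inl_ne_inl hj) Sum.inr_ne_inl h0
      exact ⟨hn2, by linarith [hc.1], by linarith [hc.2]⟩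
    · exfalso
      have h0 : (ε i j - ε (σ j i) j) • Sum.elim α β (.inl j)
          + (1:ℝ) • Sum.elim α β (.inr i)
          + (-(δ (σ j i) j)) • Sum.elim α β (.inr (σ j (σ j i))) = 0 := by
        simp only [Sum.elim_inl, Sum.elim_inr]
        linear_combination (norm := module) E2 - E1
      have hc := hI1.coeffs Sum.inl_ne_inr Sum.inl_ne_inr
        (inr_ne_inr (fun hh => hn2 hh.symm)) h0
      exact one_ne_zero hc.2.1
  have deltaOne : ∀ i, δ i j = 1 := by
    intro i
    rcases hδ i j with h | h
    · exact h
    exfalso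
    have E1 := hR i j
    rw [h] at E1
    have hin : σ j i ≠ i := fpf i
    have hnn2 : σ j (σ j i) ≠ σ j i := fpf (σ j i)
    have E2 := hR (σ j i) j
    by_cases hn2 : σ j (σ j i) = i
    · rw [hn2] at E2
      have h0 : (2:ℝ) • Sum.elim α β (.inl i0)
          + (-(ε i j + ε (σ j i) j)) • Sum.elim α β (.inl j)
          + (-(1 + δ (σ j i) j)) • Sum.elim α β (.inr i) = 0 := by
        simp only [Sum.elim_inl, Sum.elim_inr]
        linear_combination (norm := module) E1 + E2
      have hc := hI1.coeffs (inl_ne_inl hj.symm) Sum.inl_ne_inr Sum.inl_ne_inr h0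
      norm_num at hc
    · have hεsame : ε (σ j i) j = ε i j := by
        by_contra hne
        have hopp : ε (σ j i) j = -(ε i j) := by
          rcases hε (σ j i) j with h1 | h1 <;> rcases hε i j with h2 | h2 <;>
            rw [h1, h2] <;> first
              | (exact absurd (h1.trans h2.symm) hne)
              | norm_num
        rw [hopp] at E2
        have h0 : (2:ℝ) • Sum.elim α β (.inl i0) + (-1 : ℝ) • Sum.elim α β (.inr i)
            + (-(δ (σ j i) j)) • Sum.elim α β (.inr (σ j (σ j i))) = 0 := by
          simp only [Sum.elim_inl, Sum.elim_inr]
          linear_combination (norm := module) E1 + E2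
        have hc := hI1.coeffs Sum.inl_ne_inr Sum.inl_ne_inr
          (inr_ne_inr (fun hh => hn2 hh.symm)) h0
        norm_num at hc
      rw [hεsame] at E2
      rcases hδ (σ j i) j with hd2 | hd2
      · have hinv := (keyA (σ j i) hd2).1
        exact hn2 ((σ j).injective hinv)
      · rw [hd2] at E2
        have h0 : (1:ℝ) • Sum.elim α β (.inr i) + (-2 : ℝ) • Sum.elim α β (.inr (σ j i))
            + (1:ℝ) • Sum.elim α β (.inr (σ j (σ j i))) = 0 := by
          simp only [Sum.elim_inr]
          linear_combination (norm := module) E2 - E1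
        have hc := hI1.coeffs (inr_ne_inr hin.symm) (inr_ne_inr (fun hh => hn2 hh.symm))
          (inr_ne_inr hnn2.symm) h0
        norm_num at hc
  intro i
  have hd := deltaOne i
  have hA := keyA i hd
  refine ⟨fpf i, hA.1, hA.2.1, ?_⟩
  have E1 := hR i j
  rw [hd, one_smul] at E1
  linear_combination (norm := module) -E1

/-- The core contradiction: if the `ε`-sign in column `i1` does not flip along a
`σ j`-pair, one constructs an injection of `ℕ` into `Fin k`. -/
private lemma lemContr {V : Type*} [AddCommGroup V] [Module ℝ V] {k : ℕ}
    {α β : Fin k → V} {ε : Fin k → Fin k → ℝ} {σ : Fin k → Equiv.Perm (Fin k)}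
    {i0 i1 : Fin k}
    (hε : ∀ i j, ε i j = 1 ∨ ε i j = -1)
    (hI1 : ThreeIndep (Sum.elim α β))
    (hA : ∀ j', j' ≠ i0 → ∀ m, σ j' m ≠ m ∧ σ j' (σ j' m) = m ∧ ε (σ j' m) j' = ε m j' ∧
      β m + β (σ j' m) = α i0 - ε m j' • α j')
    (h10 : i1 ≠ i0) {j : Fin k} (hj0 : j ≠ i0) (hj1 : j ≠ i1) (i : Fin k)
    (hsame : ε (σ j i) i1 = ε i i1) : False := by
  obtain ⟨e, he⟩ : ∃ e, ε i i1 = e := ⟨_, rfl⟩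
  obtain ⟨f, hf⟩ : ∃ f, ε i j = f := ⟨_, rfl⟩
  have he1 : e = 1 ∨ e = -1 := he ▸ hε i i1
  have hf1 : f = 1 ∨ f = -1 := hf ▸ hε i j
  have he0 : e ≠ 0 := by rcases he1 with h | h <;> rw [h] <;> norm_num
  have hf0 : f ≠ 0 := by rcases hf1 with h | h <;> rw [h] <;> norm_num
  have key : ∀ n : ℕ, ∃ m, β m = β i + (n : ℝ) • (e • α i1 - f • α j) ∧
      ε m i1 = e ∧ ε m j = f ∧ ε (σ j m) i1 = e := by
    intro n
    induction n with
    | zero => exact ⟨i, by simp, he, hf, hsame.trans he⟩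
    | succ n ih =>
      obtain ⟨m, hm, hm1, hmj, hmn1⟩ := ih
      obtain ⟨-, hinvj_m, hsgnj_m, R1⟩ := hA j hj0 m
      rw [hmj] at R1
      obtain ⟨-, hinv1_m, hsgn1_m, R2⟩ := hA i1 h10 m
      rw [hm1] at R2
      obtain ⟨-, -, -, R3⟩ := hA i1 h10 (σ j m)
      rw [hmn1] at R3
      obtain ⟨-, hinvj_p, hsgnj_p, R4⟩ := hA j hj0 (σ i1 m)
      have hq : β (σ i1 (σ j m)) = β m - e • α i1 + f • α j := by
        linear_combination (norm := module) R3 - R1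
      have hgf : ε (σ i1 m) j = f := by
        have hcase : ε (σ i1 m) j = f ∨ ε (σ i1 m) j = -f := by
          rcases hε (σ i1 m) j with h1 | h1 <;> rcases hf1 with h2 | h2 <;>
            rw [h1, h2] <;> norm_num
        rcases hcase with hcase | hopp
        · exact hcase
        exfalso
        rw [hopp] at R4
        have hr : β (σ j (σ i1 m)) = β m + e • α i1 + f • α j := by
          linear_combination (norm := module) R4 - R2
        by_cases hrq : σ j (σ i1 m) = σ i1 (σ j m)
        · rw [hrq, hq] at hr
          have h0 : (2 * e) • Sum.elim α β (.inl i1) + (0:ℝ) • Sum.elim α β (.inl i0) = 0 := by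
            simp only [Sum.elim_inl]
            linear_combination (norm := module) -hr
          have hc := hI1.coeffs2 (z := Sum.inr i) (inl_ne_inl h10)
            Sum.inl_ne_inr Sum.inl_ne_inr h0
          have : e = 0 := by linarith [hc.1]
          exact he0 this
        · have h0 : (-(2 * e)) • Sum.elim α β (.inl i1)
              + (1:ℝ) • Sum.elim α β (.inr (σ j (σ i1 m)))
              + (-1:ℝ) • Sum.elim α β (.inr (σ i1 (σ j m))) = 0 := by
            simp only [Sum.elim_inl, Sum.elim_inr]
            linear_combination (norm := module) hr - hq
          have hc := hI1.coeffs Sum.inl_ne_inr Sum.inl_ne_inr (inr_ne_inr hrq) h0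
          exact one_ne_zero hc.2.1
      rw [hgf] at R4
      have hr : β (σ j (σ i1 m)) = β m + e • α i1 - f • α j := by
        linear_combination (norm := module) R4 - R2
      have hre : ε (σ j (σ i1 m)) i1 = e := by
        have hcase : ε (σ j (σ i1 m)) i1 = e ∨ ε (σ j (σ i1 m)) i1 = -e := by
          rcases hε (σ j (σ i1 m)) i1 with h1 | h1 <;> rcases he1 with h2 | h2 <;>
            rw [h1, h2] <;> norm_num
        rcases hcase with hcase | hopp
        · exact hcase
        exfalso
        obtain ⟨-, -, -, R5⟩ := hA i1 h10 (σ j (σ i1 m))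
        rw [hopp] at R5
        have hs : β (σ i1 (σ j (σ i1 m))) = β (σ j m) + (2 * f) • α j := by
          linear_combination (norm := module) R5 - hr - R1
        by_cases hsn : σ i1 (σ j (σ i1 m)) = σ j m
        · rw [hsn] at hs
          have h0 : (2 * f) • Sum.elim α β (.inl j) + (0:ℝ) • Sum.elim α β (.inl i0) = 0 := by
            simp only [Sum.elim_inl]
            linear_combination (norm := module) -hs
          have hc := hI1.coeffs2 (z := Sum.inr i) (inl_ne_inl hj0)
            Sum.inl_ne_inr Sum.inl_ne_inr h0
          have : f = 0 := by linarith [hc.1]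
          exact hf0 this
        · have h0 : (-(2 * f)) • Sum.elim α β (.inl j)
              + (1:ℝ) • Sum.elim α β (.inr (σ i1 (σ j (σ i1 m))))
              + (-1:ℝ) • Sum.elim α β (.inr (σ j m)) = 0 := by
            simp only [Sum.elim_inl, Sum.elim_inr]
            linear_combination (norm := module) hs
          have hc := hI1.coeffs Sum.inl_ne_inr Sum.inl_ne_inr (inr_ne_inr hsn) h0
          exact one_ne_zero hc.2.1
      refine ⟨σ j (σ i1 m), ?_, hre, hsgnj_p.trans hgf, ?_⟩
      · rw [hr, hm]
        push_cast
        module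
      · rw [hinvj_p]
        exact hsgn1_m.trans hm1
  choose F hF using key
  obtain ⟨a, b, hab, hFab⟩ := Finite.exists_ne_map_eq_of_infinite F
  have h1 := (hF a).1
  have h2 := (hF b).1
  rw [hFab, h2] at h1
  have h0 : (((a : ℝ) - b) * e) • Sum.elim α β (.inl i1)
      + (-(((a : ℝ) - b) * f)) • Sum.elim α β (.inl j) = 0 := by
    simp only [Sum.elim_inl]
    linear_combination (norm := module) -h1
  have hc := hI1.coeffs2 (z := Sum.inl i0) (inl_ne_inl (Ne.symm hj1)) (inl_ne_inl h10)
    (inl_ne_inl hj0) h0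
  have : (a : ℝ) - b = 0 := by
    rcases mul_eq_zero.mp hc.1 with h | h
    · exact h
    · exact absurd h he0
  have hab' : (a : ℝ) = b := by linarith
  exact hab (Nat.cast_injective hab')

/-- Sublemma: in the triangle configuration with `k ≥ 3`, for every `i` and every
`j` with `j ≠ 1` and `j ≠ 2` one has `ε_{σ_j(i),2} = −ε_{i,2}`. -/
theorem triangle_config_epsilon_sign_flip
    {V : Type*} [AddCommGroup V] [Module ℝ V]
    (k : ℕ) (hk : 3 ≤ k)
    (α β γ : Fin k → V)
    (ε δ : Fin k → Fin k → ℝ)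
    (hε : ∀ i j, ε i j = 1 ∨ ε i j = -1)
    (hδ : ∀ i j, δ i j = 1 ∨ δ i j = -1)
    (σ : Fin k → Equiv.Perm (Fin k))
    (hσ1 : σ ⟨0, by omega⟩ = 1)
    (hR1 : ∀ i, γ i = α ⟨0, by omega⟩ - β i)
    (hR2 : ∀ i j, γ i = ε i j • α j + δ i j • β (σ j i))
    (hI1 : ThreeIndep (Sum.elim α β))
    (hI2 : ThreeIndep (Sum.elim α γ))
    (hI3 : ThreeIndep (Sum.elim β γ)) :
    ∀ i j : Fin k, j ≠ ⟨0, by omega⟩ → j ≠ ⟨1, by omega⟩ →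
      ε (σ j i) ⟨1, by omega⟩ = - ε i ⟨1, by omega⟩ := by
  intro i j hj0 hj1
  have h10 : (⟨1, by omega⟩ : Fin k) ≠ ⟨0, by omega⟩ := Fin.ne_of_val_ne (by norm_num)
  have hR : ∀ i' j', α ⟨0, by omega⟩ - β i' = ε i' j' • α j' + δ i' j' • β (σ j' i') :=
    fun i' j' => (hR1 i').symm.trans (hR2 i' j')
  have hA : ∀ j', j' ≠ (⟨0, by omega⟩ : Fin k) → ∀ m, σ j' m ≠ m ∧ σ j' (σ j' m) = m ∧
      ε (σ j' m) j' = ε m j' ∧ β m + β (σ j' m) = α ⟨0, by omega⟩ - ε m j' • α j' :=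
    fun j' hj' => lemA hε hδ hR hI1 hj'
  have hflip : ¬ (ε (σ j i) ⟨1, by omega⟩ = ε i ⟨1, by omega⟩) :=
    fun hsame => lemContr hε hI1 hA h10 hj0 hj1 i hsame
  rcases hε (σ j i) ⟨1, by omega⟩ with h1 | h1 <;> rcases hε i ⟨1, by omega⟩ with h2 | h2 <;>
    first
      | (exact absurd (h1.trans h2.symm) hflip)
      | norm_num [h1, h2]
end

section
/- In the triangle configuration, necessarily k = 1, k = 2, or k = 4. (Equivalently: in the GKM graph of a positively curved orientable GKM₃-manifold, a triangle of vertices in which each pair of vertices is joined by k edges can only occur for k ∈ {1,2,4}.) -/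
private theorem li3_aux {V : Type*} [AddCommGroup V] [Module ℝ V] {u v w : V}
    (h : LinearIndependent ℝ ![u, v, w]) {a b c : ℝ}
    (habc : a • u + b • v + c • w = 0) : a = 0 ∧ b = 0 ∧ c = 0 := by
  have hsum : ∑ i : Fin 3, (![a, b, c] i) • (![u, v, w] i) = 0 := by
    simpa [Fin.sum_univ_three] using habc
  have h' := linearIndependent_iff'.mp h Finset.univ ![a, b, c] hsum
  exact ⟨by simpa using h' 0 (Finset.mem_univ _), by simpa using h' 1 (Finset.mem_univ _),
    by simpa using h' 2 (Finset.mem_univ _)⟩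

/-- In the triangle configuration necessarily `k = 1`, `k = 2` or `k = 4`:
in the GKM graph of a positively curved orientable GKM₃-manifold, a triangle of
vertices in which each pair of vertices is joined by `k` edges can occur only for
`k ∈ {1, 2, 4}`. -/
theorem triangle_config_k_eq_one_two_or_four
    {V : Type*} [AddCommGroup V] [Module ℝ V]
    (k : ℕ) (hk : 0 < k)
    (α β γ : Fin k → V)
    (ε δ : Fin k → Fin k → ℝ)
    (hε : ∀ i j, ε i j = 1 ∨ ε i j = -1)
    (hδ : ∀ i j, δ i j = 1 ∨ δ i j = -1)
    (σ : Fin k → Equiv.Perm (Fin k))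
    (hσ1 : σ ⟨0, hk⟩ = 1)
    (hR1 : ∀ i, γ i = α ⟨0, hk⟩ - β i)
    (hR2 : ∀ i j, γ i = ε i j • α j + δ i j • β (σ j i))
    (hI1 : ThreeIndep (Sum.elim α β))
    (hI2 : ThreeIndep (Sum.elim α γ))
    (hI3 : ThreeIndep (Sum.elim β γ)) :
    k = 1 ∨ k = 2 ∨ k = 4 := by
  by_contra hcon
  push_neg at hcon
  obtain ⟨hk1, hk2, hk4n⟩ := hcon
  have hk3 : 3 ≤ k := by omega
  set o : Fin k := ⟨0, hk⟩ with ho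
  -- basic nonvanishing of signs
  have hεne : ∀ x j : Fin k, ε x j ≠ 0 := by
    intro x j; rcases hε x j with h | h <;> rw [h] <;> norm_num
  -- independence triples
  have Taab : ∀ j1 j2 x : Fin k, j1 ≠ j2 → LinearIndependent ℝ ![α j1, α j2, β x] := by
    intro j1 j2 x h
    have := hI1 (Sum.inl j1) (Sum.inl j2) (Sum.inr x) (by simp [h]) (by simp) (by simp)
    simpa using this
  have Tabb : ∀ j x y : Fin k, x ≠ y → LinearIndependent ℝ ![α j, β x, β y] := by
    intro j x y h
    have := hI1 (Sum.inl j) (Sum.inr x) (Sum.inr y) (by simp) (by simp) (by simp [h])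
    simpa using this
  have Tbb : ∀ x y z : Fin k, x ≠ y → x ≠ z → y ≠ z → LinearIndependent ℝ ![β x, β y, β z] := by
    intro x y z h1 h2 h3
    have := hI1 (Sum.inr x) (Sum.inr y) (Sum.inr z) (by simp [h1]) (by simp [h2]) (by simp [h3])
    simpa using this
  have Taa : ∀ j1 j2 j3 : Fin k, j1 ≠ j2 → j1 ≠ j3 → j2 ≠ j3 →
      LinearIndependent ℝ ![α j1, α j2, α j3] := by
    intro j1 j2 j3 h1 h2 h3
    have := hI1 (Sum.inl j1) (Sum.inl j2) (Sum.inl j3) (by simp [h1]) (by simp [h2]) (by simp [h3])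
    simpa using this
  have Tbg : ∀ x y : Fin k, x ≠ y → LinearIndependent ℝ ![β x, β y, γ x] := by
    intro x y h
    have := hI3 (Sum.inl x) (Sum.inl y) (Sum.inr x) (by simp [h]) (by simp) (by simp)
    simpa using this
  -- the basic relation
  have hE : ∀ j x : Fin k, α o - β x = ε x j • α j + δ x j • β (σ j x) := by
    intro j x
    rw [← hR1 x]
    exact hR2 x j
  -- no fixed points
  have hL0 : ∀ j, j ≠ o → ∀ x, σ j x ≠ x := by
    intro j hj x h
    have E1 := hE j x
    rw [h] at E1
    have h0 : (1:ℝ) • α o + (-(ε x j)) • α j + (-(1 + δ x j)) • β x = 0 := by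
      linear_combination (norm := module) E1
    obtain ⟨h1, -, -⟩ := li3_aux (Taab o j x (Ne.symm hj)) h0
    exact one_ne_zero h1
  -- core lemma for points not on a 2-cycle
  have hLcore : ∀ j, j ≠ o → ∀ x, σ j (σ j x) ≠ x →
      ε (σ j x) j = -ε x j ∧ β x + β (σ j x) = α o - ε x j • α j := by
    intro j hj x h2
    have hx1 : σ j x ≠ x := hL0 j hj x
    have hx2 : σ j (σ j x) ≠ σ j x := hL0 j hj (σ j x)
    have E1 := hE j x
    have E2 := hE j (σ j x)
    have hεe : ε (σ j x) j = -ε x j := by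
      by_cases heq : ε (σ j x) j = ε x j
      · exfalso
        rw [heq] at E2
        have h0 : (1:ℝ) • β x + (δ x j - 1) • β (σ j x) + (-(δ (σ j x) j)) • β (σ j (σ j x)) = 0 := by
          linear_combination (norm := module) E2 - E1
        obtain ⟨h1, -, -⟩ := li3_aux (Tbb x (σ j x) (σ j (σ j x)) (Ne.symm hx1) (Ne.symm h2) (Ne.symm hx2)) h0
        exact one_ne_zero h1
      · rcases hε (σ j x) j with h' | h' <;> rcases hε x j with h | h <;> rw [h', h] <;>
          norm_num <;> exact absurd (h'.trans h.symm) heq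
    have hδ1 : δ x j = 1 := by
      rcases hδ x j with h | h
      · exact h
      · exfalso
        rw [h] at E1
        rw [hεe] at E2
        have h0 : (1:ℝ) • β x + (-(δ (σ j x) j)) • β (σ j (σ j x)) + (2:ℝ) • γ x = 0 := by
          linear_combination (norm := module) hR1 x + hR1 x + E1 + E2
        obtain ⟨h1, -, -⟩ := li3_aux (Tbg x (σ j (σ j x)) (Ne.symm h2)) h0
        exact one_ne_zero h1
    rw [hδ1] at E1
    exact ⟨hεe, by linear_combination (norm := module) -E1⟩
  -- doubling lemma
  have hL2 : ∀ j, j ≠ o → ∀ x, σ j (σ j x) ≠ x →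
      β (σ j (σ j x)) = β x + (2 * ε x j) • α j ∧ ε (σ j (σ j x)) j = ε x j := by
    intro j hj x h2
    have h2' : σ j (σ j (σ j x)) ≠ σ j x := fun h => h2 ((σ j).injective h)
    obtain ⟨c1, s1⟩ := hLcore j hj x h2
    obtain ⟨c2, s2⟩ := hLcore j hj (σ j x) h2'
    rw [c1] at s2 c2
    rw [neg_neg] at c2
    exact ⟨by linear_combination (norm := module) s2 - s1, c2⟩
  -- σ j is an involution for j ≠ o
  have hInv : ∀ j, j ≠ o → ∀ x, σ j (σ j x) = x := by
    intro j hj x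
    by_contra h2
    have hα0 : α j ≠ 0 := by
      have h := (Taab o j x (Ne.symm hj)).ne_zero 1
      simpa using h
    have key : ∀ m : ℕ, β (((σ j) ^ (2 * m)) x) = β x + (((2 * m : ℕ) : ℝ) * ε x j) • α j ∧
        ε (((σ j) ^ (2 * m)) x) j = ε x j := by
      intro m
      induction m with
      | zero => norm_num
      | succ n ih =>
        obtain ⟨hbi, hei⟩ := ih
        have e1 : ((σ j) ^ (2 * (n + 1))) x = σ j (σ j (((σ j) ^ (2 * n)) x)) := by
          rw [show 2 * (n + 1) = 2 * n + 1 + 1 by ring, pow_succ', pow_succ']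
          rfl
        have hy : σ j (σ j (((σ j) ^ (2 * n)) x)) ≠ ((σ j) ^ (2 * n)) x := by
          intro hf
          apply h2
          have hcomm : (σ j) ^ (2 * n) * (σ j) ^ 2 = (σ j) ^ 2 * (σ j) ^ (2 * n) := by
            rw [← pow_add, ← pow_add, add_comm]
          have e2 : ((σ j) ^ (2 * n)) (σ j (σ j x)) = σ j (σ j (((σ j) ^ (2 * n)) x)) := by
            have h3 := DFunLike.congr_fun hcomm x
            simpa [Equiv.Perm.mul_apply, pow_two] using h3
          have e3 : ((σ j) ^ (2 * n)) (σ j (σ j x)) = ((σ j) ^ (2 * n)) x := by rw [e2, hf]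
          exact ((σ j) ^ (2 * n)).injective e3
        obtain ⟨hb2, he2⟩ := hL2 j hj (((σ j) ^ (2 * n)) x) hy
        constructor
        · rw [e1, hb2, hei, hbi]
          push_cast
          module
        · rw [e1, he2, hei]
    have hord : ((σ j) ^ (2 * orderOf (σ j))) x = x := by
      rw [mul_comm, pow_mul, pow_orderOf_eq_one, one_pow]
      rfl
    obtain ⟨hb, -⟩ := key (orderOf (σ j))
    rw [hord] at hb
    have hz : (((2 * orderOf (σ j) : ℕ) : ℝ) * ε x j) • α j = 0 := by
      linear_combination (norm := module) -hb
    rcases smul_eq_zero.mp hz with h | h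
    · have hop : 0 < orderOf (σ j) := orderOf_pos (σ j)
      have hne : ((2 * orderOf (σ j) : ℕ) : ℝ) ≠ 0 := by
        simp only [ne_eq, Nat.cast_eq_zero]
        omega
      rcases mul_eq_zero.mp h with h' | h'
      · exact hne h'
      · exact hεne x j h'
    · exact hα0 h
  -- 2-cycle relations
  have hSum : ∀ j, j ≠ o → ∀ x, ε (σ j x) j = ε x j ∧
      β x + β (σ j x) = α o - ε x j • α j := by
    intro j hj x
    have hx1 : σ j x ≠ x := hL0 j hj x
    have E1 := hE j x
    have E2 := hE j (σ j x)
    rw [hInv j hj x] at E2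
    have h0 : (ε x j - ε (σ j x) j) • α j + (1 - δ (σ j x) j) • β x + (δ x j - 1) • β (σ j x) = 0 := by
      linear_combination (norm := module) E2 - E1
    obtain ⟨ha, hb, hc⟩ := li3_aux (Tabb j x (σ j x) (Ne.symm hx1)) h0
    have hδx : δ x j = 1 := by linarith
    have hεx : ε (σ j x) j = ε x j := by linarith
    rw [hδx] at E1
    exact ⟨hεx, by linear_combination (norm := module) -E1⟩
  -- distinct j's give distinct partners
  have hD2 : ∀ j j' : Fin k, j ≠ o → j' ≠ o → j ≠ j' → ∀ x, σ j x ≠ σ j' x := by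
    intro j j' hj hj' hjj' x heq
    have s1 := (hSum j hj x).2
    have s2 := (hSum j' hj' x).2
    rw [heq] at s1
    have h0 : (ε x j) • α j + (-(ε x j')) • α j' + (0:ℝ) • β x = 0 := by
      linear_combination (norm := module) s1 - s2
    obtain ⟨ha, -, -⟩ := li3_aux (Taab j j' x hjj') h0
    exact hεne x j ha
  -- each vertex has at most one non-neighbor
  have hD3 : ∀ x m m' : Fin k, m ≠ m' →
      (∃ j', j' ≠ o ∧ σ j' x = m) ∨ (∃ j', j' ≠ o ∧ σ j' x = m') := by
    intro x m m' hmm'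
    by_contra hcc
    push_neg at hcc
    obtain ⟨hm, hm'⟩ := hcc
    have hinj : Set.InjOn (fun j' => σ j' x) ↑(Finset.univ.erase o) := by
      intro j1 h1 j2 h2 he
      by_contra hne
      exact hD2 j1 j2 (Finset.ne_of_mem_erase (Finset.mem_coe.mp h1))
        (Finset.ne_of_mem_erase (Finset.mem_coe.mp h2)) hne x he
    have hsub : (Finset.univ.erase o).image (fun j' => σ j' x) ⊆ (Finset.univ.erase m).erase m' := by
      intro y hy
      obtain ⟨j', hj', rfl⟩ := Finset.mem_image.mp hy
      have hjo : j' ≠ o := Finset.ne_of_mem_erase hj'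
      exact Finset.mem_erase.mpr ⟨hm' j' hjo, Finset.mem_erase.mpr ⟨hm j' hjo, Finset.mem_univ _⟩⟩
    have hcle := Finset.card_le_card hsub
    rw [Finset.card_image_of_injOn hinj,
        Finset.card_erase_of_mem (Finset.mem_univ o),
        Finset.card_erase_of_mem (Finset.mem_erase.mpr ⟨hmm'.symm, Finset.mem_univ m'⟩),
        Finset.card_erase_of_mem (Finset.mem_univ m), Finset.card_univ, Fintype.card_fin] at hcle
    omega
  -- key scalar contradiction
  have hkey : ∀ j, j ≠ o → ∀ i : Fin k, ∀ (j₁ j₂ : Fin k) (e₁ e₂ : ℝ), j₁ ≠ j → j₂ ≠ j →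
      e₁ • α j₁ + e₂ • α j₂ - (2 * ε i j) • α j = 0 → e₁ ≠ 0 → e₂ ≠ 0 → False := by
    intro j hj i j₁ j₂ e₁ e₂ h1 h2 h0 he₁ he₂
    by_cases hj12 : j₁ = j₂
    · subst hj12
      have h0' : (e₁ + e₂) • α j₁ + (-(2 * ε i j)) • α j + (0:ℝ) • β i = 0 := by
        linear_combination (norm := module) h0
      obtain ⟨-, hb, -⟩ := li3_aux (Taab j₁ j i h1) h0'
      exact hεne i j (by linarith)
    · have h0' : e₁ • α j₁ + e₂ • α j₂ + (-(2 * ε i j)) • α j = 0 := by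
        linear_combination (norm := module) h0
      obtain ⟨ha, -, -⟩ := li3_aux (Taa j₁ j₂ j hj12 h1 h2) h0'
      exact he₁ ha
  -- edge symmetry
  have hEsymm : ∀ u v : Fin k, (∃ j', j' ≠ o ∧ σ j' u = v) → (∃ j', j' ≠ o ∧ σ j' v = u) := by
    rintro u v ⟨j', hj', hjv⟩
    exact ⟨j', hj', by rw [← hjv, hInv j' hj']⟩
  -- no two 2-cycles of σ j with the same sign
  have hNoPair : ∀ j, j ≠ o → ∀ i i' : Fin k, i' ≠ i → i' ≠ σ j i → ε i' j = ε i j → False := by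
    intro j hj i i' hne1 hne2 hεe
    have hmm' : σ j i ≠ σ j i' := fun h => hne1 (((σ j).injective h).symm)
    have him'2 : i ≠ σ j i' := by
      intro h
      apply hne2
      have h5 : σ j i = σ j (σ j i') := congrArg (σ j) h
      rw [hInv j hj] at h5
      exact h5.symm
    have sI := (hSum j hj i).2
    have sI' := (hSum j hj i').2
    rw [hεe] at sI'
    have pair1 : (∃ j₁, j₁ ≠ o ∧ σ j₁ i = i') → (∃ j₂, j₂ ≠ o ∧ σ j₂ (σ j i) = σ j i') → False := by
      rintro ⟨j₁, hj₁, e1⟩ ⟨j₂, hj₂, e2⟩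
      have hj₁j : j₁ ≠ j := by rintro rfl; exact hne2 e1.symm
      have hj₂j : j₂ ≠ j := by
        intro hrfl
        rw [hrfl, hInv j hj i] at e2
        exact him'2 e2
      have s1 : β i + β i' = α o - ε i j₁ • α j₁ := by
        rw [← e1]; exact (hSum j₁ hj₁ i).2
      have s2 : β (σ j i) + β (σ j i') = α o - ε (σ j i) j₂ • α j₂ := by
        rw [← e2]; exact (hSum j₂ hj₂ (σ j i)).2
      have h0 : ε i j₁ • α j₁ + ε (σ j i) j₂ • α j₂ - (2 * ε i j) • α j = 0 := by
        linear_combination (norm := module) s1 + s2 - sI - sI'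
      exact hkey j hj i j₁ j₂ _ _ hj₁j hj₂j h0 (hεne i j₁) (hεne (σ j i) j₂)
    have pair2 : (∃ j₁, j₁ ≠ o ∧ σ j₁ i = σ j i') → (∃ j₂, j₂ ≠ o ∧ σ j₂ i' = σ j i) → False := by
      rintro ⟨j₁, hj₁, e1⟩ ⟨j₂, hj₂, e2⟩
      have hj₁j : j₁ ≠ j := by rintro rfl; exact hmm' e1
      have hj₂j : j₂ ≠ j := by
        rintro rfl
        exact hmm' e2.symm
      have s1 : β i + β (σ j i') = α o - ε i j₁ • α j₁ := by
        rw [← e1]; exact (hSum j₁ hj₁ i).2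
      have s2 : β i' + β (σ j i) = α o - ε i' j₂ • α j₂ := by
        rw [← e2]; exact (hSum j₂ hj₂ i').2
      have h0 : ε i j₁ • α j₁ + ε i' j₂ • α j₂ - (2 * ε i j) • α j = 0 := by
        linear_combination (norm := module) s1 + s2 - sI - sI'
      exact hkey j hj i j₁ j₂ _ _ hj₁j hj₂j h0 (hεne i j₁) (hεne i' j₂)
    rcases hD3 i i' (σ j i') (Ne.symm (hL0 j hj i')) with he | he
    · have nmm' : ¬ (∃ j₂, j₂ ≠ o ∧ σ j₂ (σ j i) = σ j i') := fun h => pair1 he h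
      rcases hD3 (σ j i) (σ j i') i' (hL0 j hj i') with h' | h'
      · exact nmm' h'
      · have h'' := hEsymm (σ j i) i' h'
        have nim' : ¬ (∃ j₁, j₁ ≠ o ∧ σ j₁ i = σ j i') := fun hh => pair2 hh h''
        rcases hD3 (σ j i') (σ j i) i (hL0 j hj i) with h3 | h3
        · exact nmm' (hEsymm _ _ h3)
        · exact nim' (hEsymm _ _ h3)
    · have ni'm : ¬ (∃ j₂, j₂ ≠ o ∧ σ j₂ i' = σ j i) := fun hh => pair2 he hh
      rcases hD3 i' i (σ j i) (Ne.symm (hL0 j hj i)) with h' | h'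
      · have h'' := hEsymm i' i h'
        have nmm' : ¬(∃ j₂, j₂ ≠ o ∧ σ j₂ (σ j i) = σ j i') := fun hh => pair1 h'' hh
        rcases hD3 (σ j i) (σ j i') i' (hL0 j hj i') with h3 | h3
        · exact nmm' h3
        · exact ni'm (hEsymm _ _ h3)
      · exact ni'm h'
  -- each ε-class has at most two elements
  have hclass : ∀ j, j ≠ o → ∀ i1 i2 i3 : Fin k, i1 ≠ i2 → i1 ≠ i3 → i2 ≠ i3 →
      ε i2 j = ε i1 j → ε i3 j = ε i1 j → False := by
    intro j hj i1 i2 i3 h12 h13 h23 he2 he3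
    by_cases hc : i2 = σ j i1
    · refine hNoPair j hj i1 i3 (Ne.symm h13) ?_ he3
      rw [← hc]; exact Ne.symm h23
    · exact hNoPair j hj i1 i2 (Ne.symm h12) hc he2
  -- counting: k ≤ 4
  have hj1lt : 1 < k := by omega
  have hj1 : (⟨1, hj1lt⟩ : Fin k) ≠ o := by simp [ho, Fin.ext_iff]
  have hcard : ∀ e : ℝ, (Finset.univ.filter (fun i => ε i ⟨1, hj1lt⟩ = e)).card ≤ 2 := by
    intro e
    by_contra hgt
    push_neg at hgt
    obtain ⟨a1, a2, a3, ha1, ha2, ha3, h12, h13, h23⟩ := Finset.two_lt_card_iff.mp hgt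
    have e1 : ε a1 ⟨1, hj1lt⟩ = e := (Finset.mem_filter.mp ha1).2
    have e2 : ε a2 ⟨1, hj1lt⟩ = e := (Finset.mem_filter.mp ha2).2
    have e3 : ε a3 ⟨1, hj1lt⟩ = e := (Finset.mem_filter.mp ha3).2
    exact hclass ⟨1, hj1lt⟩ hj1 a1 a2 a3 h12 h13 h23 (by rw [e2, e1]) (by rw [e3, e1])
  have hsub2 : (Finset.univ : Finset (Fin k)) ⊆
      Finset.univ.filter (fun i => ε i ⟨1, hj1lt⟩ = 1) ∪
        Finset.univ.filter (fun i => ε i ⟨1, hj1lt⟩ = -1) := by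
    intro i _
    rcases hε i ⟨1, hj1lt⟩ with h | h
    · exact Finset.mem_union_left _ (Finset.mem_filter.mpr ⟨Finset.mem_univ _, h⟩)
    · exact Finset.mem_union_right _ (Finset.mem_filter.mpr ⟨Finset.mem_univ _, h⟩)
  have hk4 : k ≤ 4 := by
    have h1 := Finset.card_le_card hsub2
    have h2 := Finset.card_union_le (Finset.univ.filter (fun i => ε i ⟨1, hj1lt⟩ = 1))
      (Finset.univ.filter (fun i => ε i ⟨1, hj1lt⟩ = -1))
    have h3 := hcard 1
    have h4' := hcard (-1)
    rw [Finset.card_univ, Fintype.card_fin] at h1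
    omega
  -- k ≠ 3 : a fixed-point-free involution on 3 elements is impossible
  have hk3ne : k ≠ 3 := by
    intro h3
    have hx2lt : 2 < k := by omega
    have huniv3 : ∀ u v w y : Fin k, u ≠ v → u ≠ w → v ≠ w → (y = u ∨ y = v ∨ y = w) := by
      intro u v w y huv huw hvw
      by_contra hcc
      push_neg at hcc
      obtain ⟨h1', h2', h3'⟩ := hcc
      have hcard4 : ({y, u, v, w} : Finset (Fin k)).card = 4 := by
        rw [Finset.card_insert_of_notMem (by simp [h1', h2', h3']),
            Finset.card_insert_of_notMem (by simp [huv, huw]),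
            Finset.card_insert_of_notMem (by simp [hvw]),
            Finset.card_singleton]
      have hle := Finset.card_le_card (Finset.subset_univ ({y, u, v, w} : Finset (Fin k)))
      rw [hcard4, Finset.card_univ, Fintype.card_fin] at hle
      omega
    have hd01 : o ≠ (⟨1, hj1lt⟩ : Fin k) := Ne.symm hj1
    have hd02 : o ≠ (⟨2, hx2lt⟩ : Fin k) := by simp [ho, Fin.ext_iff]
    have hd12 : (⟨1, hj1lt⟩ : Fin k) ≠ ⟨2, hx2lt⟩ := by simp [Fin.ext_iff]
    have key3 : ∀ u v w : Fin k, u ≠ v → u ≠ w → v ≠ w → σ ⟨1, hj1lt⟩ u = v → False := by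
      intro u v w huv huw hvw he
      have h1' : σ ⟨1, hj1lt⟩ v = u := by rw [← he, hInv _ hj1]
      rcases huniv3 u v w (σ ⟨1, hj1lt⟩ w) huv huw hvw with h | h | h
      · rw [← h1'] at h
        exact hvw (((σ _).injective h)).symm
      · rw [← he] at h
        exact huw (((σ _).injective h)).symm
      · exact hL0 _ hj1 w h
    rcases huniv3 o ⟨1, hj1lt⟩ ⟨2, hx2lt⟩ (σ ⟨1, hj1lt⟩ o) hd01 hd02 hd12 with h | h | h
    · exact hL0 _ hj1 o h
    · exact key3 o ⟨1, hj1lt⟩ ⟨2, hx2lt⟩ hd01 hd02 hd12 h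
    · exact key3 o ⟨2, hx2lt⟩ ⟨1, hj1lt⟩ hd02 hd01 (Ne.symm hd12) h
  omega
end

section
/- Let n ≥ 3 and let g_{ij} = g_{ji} ∈ V be vectors indexed by unordered pairs of distinct elements i,j ∈ {0,1,…,n}, such that: (i) for each vertex i, the family (g_{ij})_{j≠i} is 3-independent; and (ii) for all pairwise distinct i, j, l ∈ {0,1,…,n} there exist signs a, b ∈ {1,−1} with g_{jl} = a·g_{ij} + b·g_{il}. Then there exist vectors α_0,…,α_n ∈ V such that for all i ≠ j, either g_{ij} = α_i − α_j or g_{ij} = α_j − α_i. -/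
lemma exists_fourth (n : ℕ) (hn : 3 ≤ n) (a b c : Fin (n+1)) :
    ∃ d, d ≠ a ∧ d ≠ b ∧ d ≠ c := by
  by_contra h
  push_neg at h
  have hsub : (Finset.univ : Finset (Fin (n+1))) ⊆ {a, b, c} := by
    intro x _
    by_cases hxa : x = a
    · simp [hxa]
    by_cases hxb : x = b
    · simp [hxb]
    · simp [h x hxa hxb]
  have h1 := Finset.card_le_card hsub
  have h2 : ({a, b, c} : Finset (Fin (n+1))).card ≤ 3 := by
    apply le_trans (Finset.card_insert_le _ _)
    have := Finset.card_insert_le b ({c} : Finset (Fin (n+1)))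
    simp at this ⊢
    omega
  simp at h1
  omega

lemma coeff_eq3 {V : Type*} [AddCommGroup V] [Module ℝ V] {u v w : V}
    (h : LinearIndependent ℝ ![u, v, w]) {p q r p' q' r' : ℝ}
    (heq : p • u + q • v + r • w = p' • u + q' • v + r' • w) :
    p = p' ∧ q = q' ∧ r = r' := by
  have h0 := Fintype.linearIndependent_iff.mp h ![p - p', q - q', r - r'] (by
    simp only [Fin.sum_univ_three, Matrix.cons_val_zero, Matrix.cons_val_one, Matrix.head_cons,
      Matrix.cons_val_two, Matrix.tail_cons]
    rw [sub_smul, sub_smul, sub_smul]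
    rw [show p•u - p'•u + (q•v - q'•v) + (r•w - r'•w) = (p•u + q•v + r•w) - (p'•u + q'•v + r'•w) by abel, heq, sub_self])
  refine ⟨?_, ?_, ?_⟩
  · have := h0 0; simp at this; linarith
  · have := h0 1; simp at this; linarith
  · have := h0 2; simp at this; linarith

lemma sign_arith {a b a' b' a'' b'' c d : ℝ}
    (ha : a = 1 ∨ a = -1) (hb : b = 1 ∨ b = -1) (ha' : a' = 1 ∨ a' = -1) (hb' : b' = 1 ∨ b' = -1)
    (hc : c = 1 ∨ c = -1) (hd : d = 1 ∨ d = -1)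
    (e1 : (0:ℝ) = c*a + d*a') (e2 : a'' = c*b) (e3 : b'' = d*b') :
    (-(a*b)) * (-(a'*b')) * (-(a''*b'')) = 1 := by
  subst e2 e3
  rcases ha with rfl|rfl <;> rcases ha' with rfl|rfl <;> rcases hb with rfl|rfl <;>
    rcases hb' with rfl|rfl <;> rcases hc with rfl|rfl <;> rcases hd with rfl|rfl <;>
    (norm_num at e1) <;> norm_num

lemma final_case {V : Type*} [AddCommGroup V] [Module ℝ V] {u v : V} {a b s t : ℝ}
    (ha : a = 1 ∨ a = -1) (hb : b = 1 ∨ b = -1) (hs : s = 1 ∨ s = -1) (ht : t = 1 ∨ t = -1)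
    (hrel : s * t = -(a*b)) :
    a•u + b•v = ((-s)•u - (-t)•v) ∨ a•u + b•v = ((-t)•v - (-s)•u) := by
  rcases ha with rfl|rfl <;> rcases hb with rfl|rfl <;> rcases hs with rfl|rfl <;>
    rcases ht with rfl|rfl <;> norm_num at hrel <;>
    first
      | (left; module)
      | (right; module)

/-- A 3-independent labeling `g` of the complete graph on `{0, 1, …, n}` (`n ≥ 3`)
whose triangles satisfy `g_{jl} = ±g_{ij} ± g_{il}` coincides with the labeling of a
linear torus action on `ℂP^n`: there are vectors `α_0, …, α_n` with
`g_{ij} = ±(α_i − α_j)`. -/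
theorem complete_graph_labeling_standard
    {V : Type*} [AddCommGroup V] [Module ℝ V]
    (n : ℕ) (hn : 3 ≤ n)
    (g : Fin (n + 1) → Fin (n + 1) → V)
    (hsym : ∀ i j, g i j = g j i)
    (h3 : ∀ i : Fin (n + 1), ThreeIndep (fun j : {j : Fin (n + 1) // j ≠ i} => g i j.1))
    (hface : ∀ i j l : Fin (n + 1), i ≠ j → i ≠ l → j ≠ l →
      ∃ a b : ℝ, (a = 1 ∨ a = -1) ∧ (b = 1 ∨ b = -1) ∧ g j l = a • g i j + b • g i l) :
    ∃ α : Fin (n + 1) → V, ∀ i j, i ≠ j → g i j = α i - α j ∨ g i j = α j - α i := by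
  classical
  set o : Fin (n+1) := ⟨0, by omega⟩ with ho
  set p : Fin (n+1) := ⟨1, by omega⟩ with hp
  have hpo : p ≠ o := by simp [Fin.ext_iff, ho, hp]
  -- 3-independence at the base vertex o
  have h3o : ∀ i j k : Fin (n+1), i ≠ o → j ≠ o → k ≠ o → i ≠ j → i ≠ k → j ≠ k →
      LinearIndependent ℝ ![g o i, g o j, g o k] := by
    intro i j k hi hj hk hij hik hjk
    exact h3 o ⟨i, hi⟩ ⟨j, hj⟩ ⟨k, hk⟩ (by simpa using hij) (by simpa using hik)
      (by simpa using hjk)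
  -- choose coefficients for each edge not touching o
  have hABex : ∀ i j : Fin (n+1), i ≠ o → j ≠ o → i ≠ j →
      ∃ ab : ℝ × ℝ, (ab.1 = 1 ∨ ab.1 = -1) ∧ (ab.2 = 1 ∨ ab.2 = -1) ∧
        g i j = ab.1 • g o i + ab.2 • g o j := by
    intro i j hi hj hij
    obtain ⟨a, b, ha, hb, hgab⟩ := hface o i j (Ne.symm hi) (Ne.symm hj) hij
    exact ⟨(a, b), ha, hb, hgab⟩
  set AB : Fin (n+1) → Fin (n+1) → ℝ × ℝ := fun i j =>
    if h : i ≠ o ∧ j ≠ o ∧ i ≠ j then (hABex i j h.1 h.2.1 h.2.2).choose else (1, 1) with hABdef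
  have hABspec : ∀ i j, i ≠ o → j ≠ o → i ≠ j →
      ((AB i j).1 = 1 ∨ (AB i j).1 = -1) ∧ ((AB i j).2 = 1 ∨ (AB i j).2 = -1) ∧
        g i j = (AB i j).1 • g o i + (AB i j).2 • g o j := by
    intro i j hi hj hij
    have h : i ≠ o ∧ j ≠ o ∧ i ≠ j := ⟨hi, hj, hij⟩
    simp only [hABdef, dif_pos h]
    exact (hABex i j h.1 h.2.1 h.2.2).choose_spec
  set ε : Fin (n+1) → Fin (n+1) → ℝ := fun i j => -((AB i j).1 * (AB i j).2) with hεdef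
  have hεpm : ∀ i j, i ≠ o → j ≠ o → i ≠ j → ε i j = 1 ∨ ε i j = -1 := by
    intro i j hi hj hij
    obtain ⟨ha, hb, -⟩ := hABspec i j hi hj hij
    rcases ha with h1 | h1 <;> rcases hb with h2 | h2 <;> simp [hεdef, h1, h2]
  -- symmetry of ε
  have hεsymm : ∀ i j, i ≠ o → j ≠ o → i ≠ j → ε i j = ε j i := by
    intro i j hi hj hij
    obtain ⟨k, hko, hki, hkj⟩ := exists_fourth n hn o i j
    have hli := h3o i j k hi hj hko hij (Ne.symm hki) (Ne.symm hkj)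
    obtain ⟨-, -, h1⟩ := hABspec i j hi hj hij
    obtain ⟨-, -, h2⟩ := hABspec j i hj hi (Ne.symm hij)
    have heq : (AB i j).1 • g o i + (AB i j).2 • g o j + (0:ℝ) • g o k =
        (AB j i).2 • g o i + (AB j i).1 • g o j + (0:ℝ) • g o k := by
      rw [← h1]
      rw [hsym i j, h2]
      abel
    obtain ⟨e1, e2, -⟩ := coeff_eq3 hli heq
    simp only [hεdef]
    rw [e1, e2]; ring
  -- cocycle condition
  have hcoc : ∀ i j k, i ≠ o → j ≠ o → k ≠ o → i ≠ j → i ≠ k → j ≠ k →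
      ε i j * ε i k * ε j k = 1 := by
    intro i j k hi hj hk hij hik hjk
    have hli := h3o i j k hi hj hk hij hik hjk
    obtain ⟨haij, hbij, h1⟩ := hABspec i j hi hj hij
    obtain ⟨haik, hbik, h2⟩ := hABspec i k hi hk hik
    obtain ⟨-, -, h3'⟩ := hABspec j k hj hk hjk
    obtain ⟨c, d, hc, hd, hcd⟩ := hface i j k hij hik hjk
    have heq : (0:ℝ) • g o i + (AB j k).1 • g o j + (AB j k).2 • g o k =
        (c * (AB i j).1 + d * (AB i k).1) • g o i + (c * (AB i j).2) • g o j +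
          (d * (AB i k).2) • g o k := by
      rw [zero_smul, zero_add, ← h3', hcd, h1, h2]
      simp only [smul_add, smul_smul]
      module
    obtain ⟨e1, e2, e3⟩ := coeff_eq3 hli heq
    simp only [hεdef]
    exact sign_arith haij hbij haik hbik hc hd e1 e2 e3
  -- the sign function
  set σ : Fin (n+1) → ℝ := fun j => if j = p then 1 else ε p j with hσdef
  have hσpm : ∀ j, j ≠ o → σ j = 1 ∨ σ j = -1 := by
    intro j hj
    by_cases hjp : j = p
    · simp [hσdef, hjp]
    · simp only [hσdef, if_neg hjp]
      exact hεpm p j hpo hj (fun h => hjp h.symm)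
  have hσ : ∀ i j, i ≠ o → j ≠ o → i ≠ j → σ i * σ j = ε i j := by
    intro i j hi hj hij
    by_cases hip : i = p
    · subst hip
      have hjp : j ≠ p := Ne.symm hij
      simp [hσdef, hjp]
    by_cases hjp : j = p
    · subst hjp
      simp only [hσdef, if_neg hip, if_pos rfl, mul_one]
      exact (hεsymm i p hi hpo hip).symm
    · simp only [hσdef, if_neg hip, if_neg hjp]
      have hco := hcoc p i j hpo hi hj (fun h => hip h.symm) (fun h => hjp h.symm) hij
      rcases hεpm i j hi hj hij with h1 | h1 <;> rw [h1] at hco ⊢ <;> linarith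
  -- the vectors α
  set α : Fin (n+1) → V := fun j => if h : j = o then 0 else (-(σ j)) • g o j with hαdef
  refine ⟨α, ?_⟩
  intro i j hij
  by_cases hio : i = o
  · subst hio
    have hjo : j ≠ o := Ne.symm hij
    rcases hσpm j hjo with h1 | h1
    · left
      simp [hαdef, hjo, h1]
    · right
      simp [hαdef, hjo, h1]
  by_cases hjo : j = o
  · subst hjo
    rcases hσpm i hio with h1 | h1
    · right
      rw [hsym i o]
      simp [hαdef, hio, h1]
    · left
      rw [hsym i o]
      simp [hαdef, hio, h1]
  -- main case: i, j ≠ o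
  obtain ⟨ha, hb, hg⟩ := hABspec i j hio hjo hij
  have hrel : σ i * σ j = -((AB i j).1 * (AB i j).2) := by
    exact hσ i j hio hjo hij
  have hα : α i - α j = ((-(σ i)) • g o i - (-(σ j)) • g o j) := by
    simp [hαdef, hio, hjo]
  have hα' : α j - α i = ((-(σ j)) • g o j - (-(σ i)) • g o i) := by
    simp [hαdef, hio, hjo]
  rw [hg, hα, hα']
  exact final_case ha hb (hσpm i hio) (hσpm j hjo) hrel
end

section
/- Let α and β be linearly independent vectors in a real vector space V, let k ≥ 1, let s, ε_1,…,ε_k, δ_1,…,δ_k ∈ {1,−1}, let γ_1,…,γ_k ∈ V, and let σ' and σ'' be permutations of {1,…,k} such that for every i ∈ {1,…,k}: s·α + β = (ε_i·α + γ_{σ'(i)}) − (δ_i·β + γ_{σ''(i)}). Then δ_i = −1 and ε_i = s for all i ∈ {1,…,k}. -/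
/-- Telescoping identity: if `α, β` are linearly independent and for every
`i ∈ {1, …, k}` one has `s·α + β = (ε_i·α + γ_{σ'(i)}) − (δ_i·β + γ_{σ''(i)})`
with signs `s, ε_i, δ_i` and permutations `σ', σ''`, then `δ_i = −1` and `ε_i = s`
for all `i`. -/
theorem telescoping_sign_identity
    {V : Type*} [AddCommGroup V] [Module ℝ V]
    (α β : V) (hind : LinearIndependent ℝ ![α, β])
    (k : ℕ) (hk : 0 < k)
    (s : ℝ) (hs : s = 1 ∨ s = -1)
    (ε δ : Fin k → ℝ)
    (hε : ∀ i, ε i = 1 ∨ ε i = -1) (hδ : ∀ i, δ i = 1 ∨ δ i = -1)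
    (γ : Fin k → V)
    (σ' σ'' : Equiv.Perm (Fin k))
    (h : ∀ i, s • α + β = (ε i • α + γ (σ' i)) - (δ i • β + γ (σ'' i))) :
    ∀ i, δ i = -1 ∧ ε i = s := by
  have key : ∀ i, (s - ε i) • α + (1 + δ i) • β = γ (σ' i) - γ (σ'' i) := by
    intro i
    linear_combination (norm := module) h i
  have hsum : (∑ i, (s - ε i)) • α + (∑ i, (1 + δ i)) • β = 0 := by
    rw [Finset.sum_smul, Finset.sum_smul, ← Finset.sum_add_distrib]
    calc ∑ i, ((s - ε i) • α + (1 + δ i) • β)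
        = ∑ i, (γ (σ' i) - γ (σ'' i)) := Finset.sum_congr rfl fun i _ => key i
      _ = (∑ i, γ (σ' i)) - ∑ i, γ (σ'' i) := Finset.sum_sub_distrib _ _
      _ = 0 := by rw [Equiv.sum_comp σ' γ, Equiv.sum_comp σ'' γ, sub_self]
  obtain ⟨hA, hB⟩ := (LinearIndependent.pair_iff.mp hind) _ _ hsum
  have hδ' : ∀ i ∈ Finset.univ, (1 : ℝ) + δ i = 0 := by
    rw [← Finset.sum_eq_zero_iff_of_nonneg]
    · exact hB
    · intro i _
      rcases hδ i with h1 | h1 <;> rw [h1] <;> norm_num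
  have hε' : ∀ i ∈ Finset.univ, (1 : ℝ) - s * ε i = 0 := by
    rw [← Finset.sum_eq_zero_iff_of_nonneg]
    · have : ∑ i, ((1 : ℝ) - s * ε i) = s * ∑ i, (s - ε i) := by
        rw [Finset.mul_sum]
        refine Finset.sum_congr rfl fun i _ => ?_
        rcases hs with h1 | h1 <;> rw [h1] <;> ring
      rw [this, hA, mul_zero]
    · intro i _
      rcases hs with h1 | h1 <;> rcases hε i with h2 | h2 <;> rw [h1, h2] <;> norm_num
  intro i
  have h1 := hδ' i (Finset.mem_univ i)
  have h2 := hε' i (Finset.mem_univ i)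
  constructor
  · linarith
  · rcases hs with h3 | h3 <;> rw [h3] at h2 ⊢ <;> linarith
end

section
/- Let V be a real vector space, let α_1,…,α_4, β_1, γ_1,…,γ_4 ∈ V, and let c_1,…,c_4 ∈ {1,−1}. Assume: (i) the family (α_1,…,α_4, β_1, γ_1,…,γ_4) is 3-independent; (ii) the family (γ_1,…,γ_4, α_1−γ_1,…,α_1−γ_4, β_1+c_1·γ_1,…,β_1+c_4·γ_4) is 3-independent; (iii) for all distinct i,j ∈ {1,…,4} there exist k ∈ {1,…,4} and s ∈ {1,−1} with α_1 − γ_i = s·α_k + γ_j. If for some j, i ∈ {1,…,4} and a, b ∈ {1,−1} one has α_1 − β_1 = a·(α_1 − γ_i) + b·(β_1 + c_j·γ_j), then i = j, a = 1, b = −1 and c_j = −1. -/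
lemma tri_aux {V : Type*} [AddCommGroup V] [Module ℝ V] {u v w : V}
    (h : LinearIndependent ℝ ![u, v, w]) (x y z : ℝ)
    (hrel : x • u + y • v + z • w = 0) : x = 0 ∧ y = 0 ∧ z = 0 := by
  rw [Fintype.linearIndependent_iff] at h
  have := h ![x, y, z] (by simpa [Fin.sum_univ_three] using hrel)
  exact ⟨this 0, this 1, this 2⟩



/-- Ruling out the quadrupled tetrahedron: with `α_1, …, α_4, β_1, γ_1, …, γ_4` and
signs `c_1, …, c_4` as in the configuration (3-independence at `v_0` and at `v_3`,
and the triangle relations), the relation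
`α_1 − β_1 = a·(α_1 − γ_i) + b·(β_1 + c_j·γ_j)` forces `i = j`, `a = 1`, `b = −1`
and `c_j = −1`.  (Here `α 0` plays the role of `α_1` and `β1` that of `β_1`.) -/
theorem tetrahedron_sign_determination
    {V : Type*} [AddCommGroup V] [Module ℝ V]
    (α γ : Fin 4 → V) (β1 : V)
    (c : Fin 4 → ℝ) (hc : ∀ i, c i = 1 ∨ c i = -1)
    (hI1 : ThreeIndep (Sum.elim (Sum.elim α γ) (fun _ : Unit => β1)))
    (hI2 : ThreeIndep (Sum.elim (Sum.elim γ (fun i : Fin 4 => α 0 - γ i))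
      (fun i : Fin 4 => β1 + c i • γ i)))
    (hface : ∀ i j : Fin 4, i ≠ j → ∃ (m : Fin 4) (s : ℝ), (s = 1 ∨ s = -1) ∧
      α 0 - γ i = s • α m + γ j)
    (i j : Fin 4) (a b : ℝ) (ha : a = 1 ∨ a = -1) (hb : b = 1 ∨ b = -1)
    (heq : α 0 - β1 = a • (α 0 - γ i) + b • (β1 + c j • γ j)) :
    i = j ∧ a = 1 ∧ b = -1 ∧ c j = -1 := by
  have hA : ∀ k l : Fin 4, k ≠ l →
      LinearIndependent ℝ ![γ k, γ l, β1] := by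
    intro k l hkl
    simpa using hI1 (.inl (.inr k)) (.inl (.inr l)) (.inr ()) (by simp [hkl]) (by simp) (by simp)
  have hB : ∀ k : Fin 4, LinearIndependent ℝ ![γ k, β1, α 0] := by
    intro k
    simpa using hI1 (.inl (.inr k)) (.inr ()) (.inl (.inl 0)) (by simp) (by simp) (by simp)
  rcases ha with rfl | rfl <;> rcases hb with rfl | rfl
  · -- a = 1, b = 1 : contradiction
    exfalso
    by_cases hij : i = j
    · subst hij
      have := tri_aux (hB i) (1 - c i) (-2) 0
        (by linear_combination (norm := module) heq)
      norm_num at this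
    · have := tri_aux (hA i j hij) 1 (-(c j)) (-2)
        (by linear_combination (norm := module) heq)
      norm_num at this
  · -- a = 1, b = -1 : the good case
    by_cases hij : i = j
    · subst hij
      rcases hc i with hci | hci
      · exfalso
        rw [hci] at heq
        have := tri_aux (hB i) 2 0 0 (by linear_combination (norm := module) heq)
        norm_num at this
      · exact ⟨rfl, rfl, rfl, hci⟩
    · exfalso
      have := tri_aux (hA i j hij) 1 (c j) 0
        (by linear_combination (norm := module) heq)
      norm_num at this
  · -- a = -1, b = 1
    exfalso
    by_cases hij : i = j
    · subst hij
      have := tri_aux (hB i) (-(1 + c i)) (-2) 2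
        (by linear_combination (norm := module) heq)
      norm_num at this
    · rcases hc j with hcj | hcj
      · -- c j = 1 : use a triangle face relation
        rw [hcj] at heq
        obtain ⟨m, s, hs, hm⟩ := hface i j hij
        by_cases hm0 : m = 0
        · subst hm0
          have := tri_aux (hB j) 0 (-2) (1 + s)
            (by linear_combination (norm := module) heq - hm)
          rcases hs with rfl | rfl <;> norm_num at this
        · have hAm : LinearIndependent ℝ ![α 0, α m, β1] := by
            simpa using hI1 (.inl (.inl 0)) (.inl (.inl m)) (.inr ())
              (by simp [Ne.symm hm0]) (by simp) (by simp)
          have := tri_aux hAm 1 s (-2)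
            (by linear_combination (norm := module) heq - hm)
          norm_num at this
      · -- c j = -1 : use 3-independence at v3
        have h2 : LinearIndependent ℝ ![α 0 - γ i, α 0 - γ j, β1 + c j • γ j] := by
          simpa using hI2 (.inl (.inr i)) (.inl (.inr j)) (.inr j)
            (by simp [hij]) (by simp) (by simp)
        rw [hcj] at h2 heq
        have := tri_aux h2 1 1 (-2) (by linear_combination (norm := module) heq)
        norm_num at this
  · -- a = -1, b = -1
    exfalso
    by_cases hij : i = j
    · subst hij
      have := tri_aux (hB i) (c i - 1) 0 2
        (by linear_combination (norm := module) heq)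
      norm_num at this
    · have hG : LinearIndependent ℝ ![α 0, γ i, γ j] := by
        simpa using hI1 (.inl (.inl 0)) (.inl (.inr i)) (.inl (.inr j))
          (by simp) (by simp) (by simp [hij])
      have := tri_aux hG 2 (-1) (c j)
        (by linear_combination (norm := module) heq)
      norm_num at this
end

section
/- Let n ≥ 2 and let γ_1,…,γ_n, γ'_1,…,γ'_n ∈ V be such that the combined family of these 2n vectors is 3-independent and γ_i + γ'_i = γ_j + γ'_j for all i,j ∈ {1,…,n}. Suppose that for all distinct i,j ∈ {1,…,n} there are vectors g_{ij}, g'_{ij} ∈ V and signs η_{ij}, η'_{ij}, a_{ij}, b_{ij}, c_{ij}, d_{ij} ∈ {1,−1} with g_{ij} = γ_j + η_{ij}·γ'_i = a_{ij}·γ'_j + b_{ij}·γ_i and g'_{ij} = −γ_j + η'_{ij}·γ_i = c_{ij}·γ'_j + d_{ij}·γ'_i. Then, setting α_0 := (γ_1 + γ'_1)/2 and α_m := (γ_m − γ'_m)/2 for m = 1,…,n, one has γ_m = α_0 + α_m and γ'_m = α_0 − α_m for all m, and g_{ij} = α_i + α_j and g'_{ij} = α_i − α_j for all distinct i,j ∈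 {1,…,n}. -/
lemma threeIndep_pair {V : Type*} [AddCommGroup V] [Module ℝ V] {I : Type*} {w : I → V}
    (hI : ThreeIndep w) {p q r : I} (hpq : p ≠ q) (hpr : p ≠ r) (hqr : q ≠ r)
    {x y : ℝ} (h : x • w p + y • w q = 0) : x = 0 ∧ y = 0 := by
  have h3 := hI p q r hpq hpr hqr
  rw [Fintype.linearIndependent_iff] at h3
  have := h3 ![x, y, 0] (by simpa [Fin.sum_univ_three] using h)
  exact ⟨this 0, this 1⟩

/-- The labeling of the GKM graph `Γ_{ℍP^n}` is standard: with
`α_0 := (γ_1 + γ'_1)/2` and `α_m := (γ_m − γ'_m)/2` (here the index `1` of the paper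
is `⟨0, _⟩ : Fin n`), one has `γ_m = α_0 + α_m`, `γ'_m = α_0 − α_m`, and for distinct
`i, j` the weights `g_{ij} = α_i + α_j` and `g'_{ij} = α_i − α_j`. -/
theorem hp_labeling_standard
    {V : Type*} [AddCommGroup V] [Module ℝ V]
    (n : ℕ) (hn : 2 ≤ n)
    (γ γ' : Fin n → V)
    (hI : ThreeIndep (Sum.elim γ γ'))
    (hconst : ∀ i j, γ i + γ' i = γ j + γ' j)
    (g g' : Fin n → Fin n → V)
    (η η' a b c d : Fin n → Fin n → ℝ)
    (hη : ∀ i j, η i j = 1 ∨ η i j = -1)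
    (hη' : ∀ i j, η' i j = 1 ∨ η' i j = -1)
    (ha : ∀ i j, a i j = 1 ∨ a i j = -1)
    (hb : ∀ i j, b i j = 1 ∨ b i j = -1)
    (hc : ∀ i j, c i j = 1 ∨ c i j = -1)
    (hd : ∀ i j, d i j = 1 ∨ d i j = -1)
    (hg1 : ∀ i j, i ≠ j → g i j = γ j + η i j • γ' i)
    (hg2 : ∀ i j, i ≠ j → g i j = a i j • γ' j + b i j • γ i)
    (hg'1 : ∀ i j, i ≠ j → g' i j = -γ j + η' i j • γ i)
    (hg'2 : ∀ i j, i ≠ j → g' i j = c i j • γ' j + d i j • γ' i) :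
    (∀ m : Fin n,
        γ m = (2 : ℝ)⁻¹ • (γ ⟨0, by omega⟩ + γ' ⟨0, by omega⟩)
            + (2 : ℝ)⁻¹ • (γ m - γ' m) ∧
        γ' m = (2 : ℝ)⁻¹ • (γ ⟨0, by omega⟩ + γ' ⟨0, by omega⟩)
            - (2 : ℝ)⁻¹ • (γ m - γ' m)) ∧
    (∀ i j : Fin n, i ≠ j →
        g i j = (2 : ℝ)⁻¹ • (γ i - γ' i) + (2 : ℝ)⁻¹ • (γ j - γ' j) ∧
        g' i j = (2 : ℝ)⁻¹ • (γ i - γ' i) - (2 : ℝ)⁻¹ • (γ j - γ' j)) := by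
  constructor
  · intro m
    have h := hconst m ⟨0, by omega⟩
    constructor
    · linear_combination (norm := module) (2:ℝ)⁻¹ • h
    · linear_combination (norm := module) (2:ℝ)⁻¹ • h
  · intro i j hij
    have hσ := hconst i j
    -- useful distinctness facts in the sum type
    have hli_lj : (Sum.inl i : Fin n ⊕ Fin n) ≠ Sum.inl j := by simp [hij]
    have hlj_li : (Sum.inl j : Fin n ⊕ Fin n) ≠ Sum.inl i := by simp [hij.symm]
    have hl_r : ∀ p q : Fin n, (Sum.inl p : Fin n ⊕ Fin n) ≠ Sum.inr q := by simp
    have hr_l : ∀ p q : Fin n, (Sum.inr p : Fin n ⊕ Fin n) ≠ Sum.inl q := by simp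
    -- determine η i j = -1
    have hηij : η i j = -1 := by
      rcases hη i j with hE | hE
      · exfalso
        have e := (hg1 i j hij).symm.trans (hg2 i j hij)
        rw [hE, one_smul] at e
        rcases ha i j with hA | hA <;> rcases hb i j with hB | hB <;>
          rw [hA, hB] at e
        · have h0 : (2:ℝ) • (Sum.elim γ γ' (Sum.inl j))
              + (-2:ℝ) • (Sum.elim γ γ' (Sum.inl i)) = 0 := by
            show (2:ℝ) • γ j + (-2:ℝ) • γ i = 0
            linear_combination (norm := module) e - hσ
          have := (threeIndep_pair hI hlj_li (hl_r j i) (hl_r i i) h0).1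
          norm_num at this
        · have h0 : (2:ℝ) • (Sum.elim γ γ' (Sum.inl j))
              + (0:ℝ) • (Sum.elim γ γ' (Sum.inl i)) = 0 := by
            show (2:ℝ) • γ j + (0:ℝ) • γ i = 0
            linear_combination (norm := module) e - hσ
          have := (threeIndep_pair hI hlj_li (hl_r j i) (hl_r i i) h0).1
          norm_num at this
        · have h0 : (2:ℝ) • (Sum.elim γ γ' (Sum.inr i))
              + (0:ℝ) • (Sum.elim γ γ' (Sum.inl i)) = 0 := by
            show (2:ℝ) • γ' i + (0:ℝ) • γ i = 0
            linear_combination (norm := module) e + hσ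
          have := (threeIndep_pair hI (hr_l i i) (hr_l i j) hli_lj h0).1
          norm_num at this
        · have h0 : (2:ℝ) • (Sum.elim γ γ' (Sum.inl i))
              + (2:ℝ) • (Sum.elim γ γ' (Sum.inr i)) = 0 := by
            show (2:ℝ) • γ i + (2:ℝ) • γ' i = 0
            linear_combination (norm := module) e + hσ
          have := (threeIndep_pair hI (hl_r i i) hli_lj (hr_l i j) h0).1
          norm_num at this
      · exact hE
    -- determine η' i j = 1
    have hη'ij : η' i j = 1 := by
      rcases hη' i j with hE | hE
      · exact hE
      · exfalso
        have e := (hg'1 i j hij).symm.trans (hg'2 i j hij)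
        rw [hE] at e
        rcases hc i j with hC | hC <;> rcases hd i j with hD | hD <;>
          rw [hC, hD] at e
        · have h0 : (2:ℝ) • (Sum.elim γ γ' (Sum.inl j))
              + (2:ℝ) • (Sum.elim γ γ' (Sum.inr j)) = 0 := by
            show (2:ℝ) • γ j + (2:ℝ) • γ' j = 0
            linear_combination (norm := module) -e - hσ
          have := (threeIndep_pair hI (hl_r j j) hlj_li (hr_l j i) h0).1
          norm_num at this
        · have h0 : (2:ℝ) • (Sum.elim γ γ' (Sum.inl i))
              + (0:ℝ) • (Sum.elim γ γ' (Sum.inl j)) = 0 := by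
            show (2:ℝ) • γ i + (0:ℝ) • γ j = 0
            linear_combination (norm := module) hσ - e
          have := (threeIndep_pair hI hli_lj (hl_r i i) (hl_r j i) h0).1
          norm_num at this
        · have h0 : (2:ℝ) • (Sum.elim γ γ' (Sum.inl j))
              + (0:ℝ) • (Sum.elim γ γ' (Sum.inl i)) = 0 := by
            show (2:ℝ) • γ j + (0:ℝ) • γ i = 0
            linear_combination (norm := module) -e - hσ
          have := (threeIndep_pair hI hlj_li (hl_r j i) (hl_r i i) h0).1
          norm_num at this
        · have h0 : (2:ℝ) • (Sum.elim γ γ' (Sum.inl j))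
              + (-2:ℝ) • (Sum.elim γ γ' (Sum.inr i)) = 0 := by
            show (2:ℝ) • γ j + (-2:ℝ) • γ' i = 0
            linear_combination (norm := module) -e - hσ
          have := (threeIndep_pair hI (hl_r j i) hlj_li (hr_l i i) h0).1
          norm_num at this
    constructor
    · rw [hg1 i j hij, hηij]
      linear_combination (norm := module) (-(2:ℝ)⁻¹) • hσ
    · rw [hg'1 i j hij, hη'ij]
      linear_combination (norm := module) (2:ℝ)⁻¹ • hσ
end

section
/- Let α_1,…,α_4, β_1,…,β_4, γ_1,…,γ_4 be vectors in a real vector space satisfying γ_1 = α_1 − β_1 = α_2 + β_2 = α_3 + β_3 = α_4 + β_4, γ_2 = α_1 − β_2 = α_2 + β_1, γ_3 = α_1 − β_3 = −α_2 + β_4, and γ_4 = α_1 − β_4 = −α_2 + β_3. Then α_1 = (β_1 + β_2 + β_3 + β_4)/2; for i = 2, 3, 4 one has α_i = (−β_1 − β_i + Σ_{j∉{1,i}} β_j)/2; and for each i = 1,…,4 one has γ_i = (−β_i + Σ_{j≠i} β_j)/2. -/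
/-- The labeling of the GKM graph `Γ_{𝕆P²}` is standard: the relations forced by the
triangle sublemmas determine all weights in terms of `β_1, …, β_4`.  (Indices are
shifted: `α 0` is the paper's `α_1`, etc.) -/
theorem op2_labeling_standard
    {V : Type*} [AddCommGroup V] [Module ℝ V]
    (α β γ : Fin 4 → V)
    (h10 : γ 0 = α 0 - β 0) (h11 : γ 0 = α 1 + β 1)
    (h12 : γ 0 = α 2 + β 2) (h13 : γ 0 = α 3 + β 3)
    (h20 : γ 1 = α 0 - β 1) (h21 : γ 1 = α 1 + β 0)
    (h30 : γ 2 = α 0 - β 2) (h31 : γ 2 = -α 1 + β 3)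
    (h40 : γ 3 = α 0 - β 3) (h41 : γ 3 = -α 1 + β 2) :
    α 0 = (2 : ℝ)⁻¹ • (β 0 + β 1 + β 2 + β 3) ∧
    (∀ i : Fin 4, i ≠ 0 →
      α i = (2 : ℝ)⁻¹ • (-β 0 - β i + ∑ j ∈ Finset.univ \ ({0, i} : Finset (Fin 4)), β j)) ∧
    (∀ i : Fin 4,
      γ i = (2 : ℝ)⁻¹ • (-β i + ∑ j ∈ Finset.univ \ ({i} : Finset (Fin 4)), β j)) := by
  refine ⟨?_, ?_, ?_⟩
  · linear_combination (norm := module)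
      (-(2:ℝ)⁻¹) • (h10 - h11 + h30 - h31)
  · intro i hi
    fin_cases i
    · exact absurd rfl hi
    · show α 1 = (2:ℝ)⁻¹ • (-β 0 - β 1 + ∑ j ∈ Finset.univ \ ({0,1} : Finset (Fin 4)), β j)
      rw [show (Finset.univ \ ({0,1} : Finset (Fin 4))) = {2,3} by decide]
      rw [Finset.sum_insert (by decide), Finset.sum_singleton]
      linear_combination (norm := module)
        (2:ℝ)⁻¹ • (h10 - h11 - h30 + h31)
    · show α 2 = (2:ℝ)⁻¹ • (-β 0 - β 2 + ∑ j ∈ Finset.univ \ ({0,2} : Finset (Fin 4)), β j)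
      rw [show (Finset.univ \ ({0,2} : Finset (Fin 4))) = {1,3} by decide]
      rw [Finset.sum_insert (by decide), Finset.sum_singleton]
      linear_combination (norm := module)
        h10 - h12 - (2:ℝ)⁻¹ • (h10 - h11 + h30 - h31)
    · show α 3 = (2:ℝ)⁻¹ • (-β 0 - β 3 + ∑ j ∈ Finset.univ \ ({0,3} : Finset (Fin 4)), β j)
      rw [show (Finset.univ \ ({0,3} : Finset (Fin 4))) = {1,2} by decide]
      rw [Finset.sum_insert (by decide), Finset.sum_singleton]
      linear_combination (norm := module)
        h10 - h13 - (2:ℝ)⁻¹ • (h10 - h11 + h30 - h31)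
  · intro i
    fin_cases i
    · show γ 0 = (2:ℝ)⁻¹ • (-β 0 + ∑ j ∈ Finset.univ \ ({0} : Finset (Fin 4)), β j)
      rw [show (Finset.univ \ ({0} : Finset (Fin 4))) = {1,2,3} by decide]
      rw [Finset.sum_insert (by decide), Finset.sum_insert (by decide), Finset.sum_singleton]
      linear_combination (norm := module)
        h11 + (2:ℝ)⁻¹ • (h10 - h11 - h30 + h31)
    · show γ 1 = (2:ℝ)⁻¹ • (-β 1 + ∑ j ∈ Finset.univ \ ({1} : Finset (Fin 4)), β j)
      rw [show (Finset.univ \ ({1} : Finset (Fin 4))) = {0,2,3} by decide]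
      rw [Finset.sum_insert (by decide), Finset.sum_insert (by decide), Finset.sum_singleton]
      linear_combination (norm := module)
        h20 - (2:ℝ)⁻¹ • (h10 - h11 + h30 - h31)
    · show γ 2 = (2:ℝ)⁻¹ • (-β 2 + ∑ j ∈ Finset.univ \ ({2} : Finset (Fin 4)), β j)
      rw [show (Finset.univ \ ({2} : Finset (Fin 4))) = {0,1,3} by decide]
      rw [Finset.sum_insert (by decide), Finset.sum_insert (by decide), Finset.sum_singleton]
      linear_combination (norm := module)
        h30 - (2:ℝ)⁻¹ • (h10 - h11 + h30 - h31)
    · show γ 3 = (2:ℝ)⁻¹ • (-β 3 + ∑ j ∈ Finset.univ \ ({3} : Finset (Fin 4)), β j)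
      rw [show (Finset.univ \ ({3} : Finset (Fin 4))) = {0,1,2} by decide]
      rw [Finset.sum_insert (by decide), Finset.sum_insert (by decide), Finset.sum_singleton]
      linear_combination (norm := module)
        h40 - (2:ℝ)⁻¹ • (h10 - h11 + h30 - h31)
end
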